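/- arXiv:1710.07777 — 9 statements merged into one kernel-verified Lean document; each statement's English description precedes it below -/
import Mathlib

section
/- Let a and b be real numbers with 0 < a < 1, b > 1, and ab ≥ 1. Then the Weierstrass sine function S(x) = ∑_{n=0}^∞ aⁿ sin(bⁿπx) has no finite derivative at any real point x; that is, for every x ∈ ℝ there is no real number L such that S is differentiable at x with derivative L. -/
open Real Filter MeasureTheory FourierTransform Complex Topology

/-- A smooth compactly supported complex function on ℝ is a Schwartz map. -/
noncomputable def schwartzOfCompactSupport (f : ℝ → ℂ) (hf : ContDiff ℝ (⊤:ℕ∞) f)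
    (h : HasCompactSupport f) : SchwartzMap ℝ ℂ where
  toFun := f
  smooth' := hf
  decay' := by
    intro k n
    have hcont : Continuous fun x : ℝ => ‖x‖ ^ k * ‖iteratedFDeriv ℝ n f x‖ :=
      (continuous_norm.pow k).mul (hf.continuous_iteratedFDeriv (mod_cast le_top)).norm
    have hsupp : HasCompactSupport fun x : ℝ => ‖x‖ ^ k * ‖iteratedFDeriv ℝ n f x‖ :=
      ((h.iteratedFDeriv n).norm).mul_left
    obtain ⟨C, hC⟩ := hcont.bounded_above_of_compact_support hsupp
    exact ⟨C, fun x => by simpa using hC x⟩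

set_option maxHeartbeats 2000000 in
/-- Hardy's theorem: for `0 < a < 1`, `b > 1` with `a * b ≥ 1`, the Weierstrass
sine function `S(x) = ∑ aⁿ sin(bⁿ π x)` has no finite derivative at any point. -/
theorem weierstrass_sin_nowhere_differentiable
    (a b : ℝ) (ha0 : 0 < a) (ha1 : a < 1) (hb : 1 < b) (hab : 1 ≤ a * b) (x : ℝ) :
    ¬ ∃ L : ℝ,
      HasDerivAt (fun y : ℝ => ∑' n : ℕ, a ^ n * Real.sin (b ^ n * π * y)) L x := by
  rintro ⟨L, hL⟩
  have hb0 : 0 < b := lt_trans one_pos hb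
  set f : ℝ → ℝ := fun y : ℝ => ∑' n : ℕ, a ^ n * Real.sin (b ^ n * π * y) with hf
  -- ### basic facts about f
  have hgeom : Summable fun n : ℕ => a ^ n := summable_geometric_of_lt_one ha0.le ha1
  have hbnd : ∀ (n : ℕ) (y : ℝ), ‖a ^ n * Real.sin (b ^ n * π * y)‖ ≤ a ^ n := by
    intro n y
    rw [norm_mul, norm_pow, Real.norm_eq_abs, Real.norm_eq_abs, abs_of_pos ha0]
    calc a ^ n * |Real.sin (b ^ n * π * y)| ≤ a ^ n * 1 := by
          gcongr; exact Real.abs_sin_le_one _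
      _ = a ^ n := mul_one _
  have hsum : ∀ y : ℝ, Summable fun n : ℕ => a ^ n * Real.sin (b ^ n * π * y) := by
    intro y
    exact Summable.of_norm_bounded hgeom (fun n => hbnd n y)
  have hfcont : Continuous f := by
    apply continuous_tsum (f := fun (n : ℕ) (y : ℝ) => a ^ n * Real.sin (b ^ n * π * y))
    · exact fun n => (continuous_const.mul ((Real.continuous_sin.comp (continuous_const.mul
        continuous_id'))))
    · exact hgeom
    · exact fun n y => hbnd n y
  have hM : ∀ y : ℝ, |f y| ≤ (1 - a)⁻¹ := by
    intro y
    calc |f y| ≤ ∑' n : ℕ, ‖a ^ n * Real.sin (b ^ n * π * y)‖ :=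
          norm_tsum_le_tsum_norm ((hsum y).norm)
      _ ≤ ∑' n : ℕ, a ^ n := by
          apply Summable.tsum_le_tsum (fun n => hbnd n y) ((hsum y).norm) hgeom
      _ = (1 - a)⁻¹ := tsum_geometric_of_lt_one ha0.le ha1
  set M : ℝ := (1 - a)⁻¹ with hMdef
  have hM0 : 0 < M := by
    rw [hMdef]
    have h1a : 0 < 1 - a := by linarith
    positivity
  -- ### the Schwartz function g whose Fourier transform is a bump at 1/2
  set r : ℝ := min (1/2 - 1/(2*b)) ((b-1)/2) with hr
  have hr0 : 0 < r := by
    apply lt_min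
    · rw [sub_pos, div_lt_div_iff₀ (by positivity) (by positivity)]; linarith
    · linarith
  have hrlt : r < 1/2 := by
    have h1 : (0:ℝ) < 1/(2*b) := by positivity
    exact lt_of_le_of_lt (min_le_left _ _) (by linarith)
  set bump : ContDiffBump (1/2 : ℝ) := ⟨r/2, r, by positivity, by linarith⟩ with hbump
  set φ : ℝ → ℂ := fun ξ => ((bump ξ : ℝ) : ℂ) with hφ
  have hbumpsmooth : ContDiff ℝ (⊤:ℕ∞) (⇑bump) := bump.contDiff
  have hφsmooth : ContDiff ℝ (⊤:ℕ∞) φ := Complex.ofRealCLM.contDiff.comp hbumpsmooth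
  have hφsupp : HasCompactSupport φ :=
    bump.hasCompactSupport.comp_left (g := fun t : ℝ => (t : ℂ)) (by simp)
  set φS : SchwartzMap ℝ ℂ := schwartzOfCompactSupport φ hφsmooth hφsupp with hφS
  set gS : SchwartzMap ℝ ℂ := (SchwartzMap.fourierTransformCLE ℂ (SchwartzMap ℝ ℂ)).symm φS with hgS
  set g : ℝ → ℂ := ⇑gS with hg
  have hFg : 𝓕 g = φ := by
    have h2 : SchwartzMap.fourierTransformCLE ℂ (SchwartzMap ℝ ℂ) ((SchwartzMap.fourierTransformCLE ℂ (SchwartzMap ℝ ℂ)).symm φS)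
        = φS := (SchwartzMap.fourierTransformCLE ℂ (SchwartzMap ℝ ℂ)).apply_symm_apply φS
    calc 𝓕 g = ⇑(SchwartzMap.fourierTransformCLE ℂ (SchwartzMap ℝ ℂ)
          ((SchwartzMap.fourierTransformCLE ℂ (SchwartzMap ℝ ℂ)).symm φS)) := by
          rfl
      _ = φ := by rw [h2]; rfl
  -- values of φ
  have hφval : ∀ t : ℝ, (t ≤ 1/(2*b) ∨ b/2 ≤ t) → φ t = 0 := by
    intro t ht
    have h2 : bump t = 0 := by
      apply bump.zero_of_le_dist
      rw [Real.dist_eq]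
      rcases ht with h | h
      · rw [abs_sub_comm]
        have h1b : 1/(2*b) < 1/2 := by
          rw [div_lt_div_iff₀ (by positivity) (by positivity)]; linarith
        calc r ≤ 1/2 - 1/(2*b) := min_le_left _ _
          _ ≤ 1/2 - t := by linarith
          _ ≤ |1/2 - t| := le_abs_self _
      · calc r ≤ (b-1)/2 := min_le_right _ _
          _ ≤ t - 1/2 := by linarith
          _ ≤ |t - 1/2| := le_abs_self _
    simp [hφ, h2]
  have hφhalf : φ (1/2) = 1 := by
    have h2 : bump (1/2) = 1 := bump.one_of_mem_closedBall (by
      simp only [Metric.mem_closedBall, dist_self]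
      exact bump.rIn_pos.le)
    simp only [hφ]
    rw [h2, Complex.ofReal_one]
  -- integrability of g
  have hgint : Integrable g := gS.integrable
  have hgnormint : Integrable (fun u : ℝ => ‖u‖ * ‖g u‖) := by
    simpa using gS.integrable_pow_mul volume 1
  have hugint : Integrable (fun u : ℝ => u • g u) := by
    refine hgnormint.mono' ?_ ?_
    · exact (continuous_id.smul gS.continuous).aestronglyMeasurable
    · filter_upwards with u
      simp [norm_smul]
  -- key Fourier computation
  have hkey : ∀ c : ℝ, (∫ u : ℝ, Complex.exp ((c * u : ℝ) * Complex.I) * g u)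
      = φ (-c / (2 * π)) := by
    intro c
    rw [← hFg, Real.fourier_real_eq_integral_exp_smul]
    congr 1 with u
    rw [smul_eq_mul]
    congr 2
    have hpi : (π:ℂ) ≠ 0 := Complex.ofReal_ne_zero.mpr Real.pi_ne_zero
    push_cast
    field_simp
  -- φ vanishes near 0, hence ∫ g = 0 and ∫ u g = 0
  have hφ0ev : φ =ᶠ[𝓝 (0:ℝ)] (fun _ => (0:ℂ)) := by
    have hball : Metric.ball (0:ℝ) (1/2 - r) ∈ 𝓝 (0:ℝ) :=
      Metric.ball_mem_nhds _ (by linarith)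
    filter_upwards [hball] with ξ hξ
    have h1 : |ξ| < 1/2 - r := by simpa [Real.dist_eq] using hξ
    have h2 : bump ξ = 0 := by
      apply bump.zero_of_le_dist
      rw [Real.dist_eq, abs_sub_comm]
      calc r ≤ 1/2 - |ξ| := by linarith
        _ ≤ 1/2 - ξ := by have := le_abs_self ξ; linarith
        _ ≤ |1/2 - ξ| := le_abs_self _
    simp [hφ, h2]
  have hg0 : (∫ u : ℝ, g u) = 0 := by
    have h0 : 𝓕 g 0 = ∫ u : ℝ, g u := by
      rw [Real.fourier_real_eq]; simp
    rw [← h0, hFg, hφ0ev.self_of_nhds]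
  have hug0 : (∫ u : ℝ, u • g u) = 0 := by
    have hD := Real.hasDerivAt_fourier hgint hugint 0
    rw [hFg] at hD
    have hD0 : HasDerivAt φ 0 0 :=
      (hasDerivAt_const (0:ℝ) (0:ℂ)).congr_of_eventuallyEq hφ0ev
    have hEq : 𝓕 (fun u : ℝ => (-2 * ↑π * Complex.I * ↑u) • g u) 0 = 0 := hD.unique hD0
    rw [Real.fourier_real_eq] at hEq
    simp only [mul_zero, neg_zero] at hEq
    have hEq2 : (∫ u : ℝ, (-2 * ↑π * Complex.I * (u:ℂ)) • g u) = 0 := by simpa using hEq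
    have hfac : (fun u : ℝ => (-2 * ↑π * Complex.I * (u:ℂ)) • g u)
        = fun u : ℝ => (-2 * ↑π * Complex.I) • (u • g u) := by
      funext u
      rw [smul_eq_mul, smul_eq_mul, Complex.real_smul]
      ring
    rw [hfac, integral_smul, smul_eq_mul, mul_eq_zero] at hEq2
    rcases hEq2 with h | h
    · exact absurd h (by simp [Complex.ext_iff, Real.pi_ne_zero])
    · exact h
  -- integrability of modulated g
  have hexpint : ∀ c : ℝ,
      Integrable (fun u : ℝ => Complex.exp ((c * u : ℝ) * Complex.I) * g u) := by
    intro c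
    refine hgint.norm.mono' ?_ ?_
    · apply Continuous.aestronglyMeasurable
      exact (Complex.continuous_exp.comp ((Complex.continuous_ofReal.comp
        (continuous_const.mul continuous_id')).mul continuous_const)).mul gS.continuous
    · filter_upwards with u
      rw [norm_mul, Complex.norm_exp_ofReal_mul_I, one_mul]
  -- the single-term Fourier integrals
  have hT : ∀ (n : ℕ) (s : ℝ),
      (∫ u : ℝ, ((Real.sin (b ^ n * π * (x + s * u)) : ℝ) : ℂ) * g u)
      = (Complex.exp ((-(b ^ n * π * x) : ℝ) * Complex.I) * φ (b ^ n * s / 2)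
        - Complex.exp (((b ^ n * π * x) : ℝ) * Complex.I) * φ (-(b ^ n * s) / 2))
          * Complex.I / 2 := by
    intro n s
    have hsplit : ∀ u : ℝ, ((Real.sin (b ^ n * π * (x + s * u)) : ℝ) : ℂ) * g u
        = (Complex.exp ((-(b ^ n * π * x) : ℝ) * Complex.I)
            * (Complex.exp (((-(b ^ n * π * s)) * u : ℝ) * Complex.I) * g u)
          - Complex.exp (((b ^ n * π * x) : ℝ) * Complex.I)
            * (Complex.exp (((b ^ n * π * s) * u : ℝ) * Complex.I) * g u))
          * (Complex.I / 2) := by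
      intro u
      have e1 : (-(((b ^ n * π * (x + s * u) : ℝ)) : ℂ) * Complex.I)
          = ((-(b ^ n * π * x) : ℝ) * Complex.I) + (((-(b ^ n * π * s)) * u : ℝ) * Complex.I) := by
        push_cast; ring
      have e2 : ((((b ^ n * π * (x + s * u) : ℝ)) : ℂ) * Complex.I)
          = (((b ^ n * π * x) : ℝ) * Complex.I) + (((b ^ n * π * s) * u : ℝ) * Complex.I) := by
        push_cast; ring
      rw [Complex.ofReal_sin, Complex.sin, e1, e2, Complex.exp_add, Complex.exp_add]
      ring
    have harg1 : -(-(b ^ n * π * s)) / (2 * π) = b ^ n * s / 2 := by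
      field_simp
    have harg2 : -(b ^ n * π * s) / (2 * π) = -(b ^ n * s) / 2 := by
      field_simp
    calc (∫ u : ℝ, ((Real.sin (b ^ n * π * (x + s * u)) : ℝ) : ℂ) * g u)
        = ∫ u : ℝ, (Complex.exp ((-(b ^ n * π * x) : ℝ) * Complex.I)
            * (Complex.exp (((-(b ^ n * π * s)) * u : ℝ) * Complex.I) * g u)
          - Complex.exp (((b ^ n * π * x) : ℝ) * Complex.I)
            * (Complex.exp (((b ^ n * π * s) * u : ℝ) * Complex.I) * g u))
          * (Complex.I / 2) := by simp_rw [hsplit]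
      _ = (∫ u : ℝ, (Complex.exp ((-(b ^ n * π * x) : ℝ) * Complex.I)
            * (Complex.exp (((-(b ^ n * π * s)) * u : ℝ) * Complex.I) * g u)
          - Complex.exp (((b ^ n * π * x) : ℝ) * Complex.I)
            * (Complex.exp (((b ^ n * π * s) * u : ℝ) * Complex.I) * g u)))
          * (Complex.I / 2) := by rw [integral_mul_const]
      _ = (Complex.exp ((-(b ^ n * π * x) : ℝ) * Complex.I)
            * (∫ u : ℝ, Complex.exp (((-(b ^ n * π * s)) * u : ℝ) * Complex.I) * g u)
          - Complex.exp (((b ^ n * π * x) : ℝ) * Complex.I)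
            * (∫ u : ℝ, Complex.exp (((b ^ n * π * s) * u : ℝ) * Complex.I) * g u))
          * (Complex.I / 2) := by
          rw [integral_sub ((hexpint _).const_mul _) ((hexpint _).const_mul _),
            integral_const_mul, integral_const_mul]
      _ = _ := by rw [hkey, hkey, harg1, harg2]; ring
  -- expansion of the convolution-type integral as a series
  have hJ : ∀ s : ℝ, (∫ u : ℝ, ((f (x + s * u) : ℝ) : ℂ) * g u)
      = ∑' n : ℕ, ((a ^ n : ℝ) : ℂ)
          * ∫ u : ℝ, ((Real.sin (b ^ n * π * (x + s * u)) : ℝ) : ℂ) * g u := by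
    intro s
    have hFint : ∀ n : ℕ, Integrable
        (fun u : ℝ => ((a ^ n * Real.sin (b ^ n * π * (x + s * u)) : ℝ) : ℂ) * g u) := by
      intro n
      refine (hgint.norm.const_mul (a ^ n)).mono' ?_ ?_
      · apply Continuous.aestronglyMeasurable
        exact ((Complex.continuous_ofReal.comp (continuous_const.mul (Real.continuous_sin.comp
          (continuous_const.mul (continuous_const.add
            (continuous_const.mul continuous_id')))))).mul gS.continuous)
      · filter_upwards with u
        rw [norm_mul, Complex.norm_real]
        exact mul_le_mul_of_nonneg_right (hbnd n _) (norm_nonneg _)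
    have hFsum : Summable fun n : ℕ =>
        ∫ u : ℝ, ‖((a ^ n * Real.sin (b ^ n * π * (x + s * u)) : ℝ) : ℂ) * g u‖ := by
      refine Summable.of_nonneg_of_le (fun n => integral_nonneg (fun u => norm_nonneg _))
        (fun n => ?_) (hgeom.mul_right (∫ u : ℝ, ‖g u‖))
      calc (∫ u : ℝ, ‖((a ^ n * Real.sin (b ^ n * π * (x + s * u)) : ℝ) : ℂ) * g u‖)
          ≤ ∫ u : ℝ, a ^ n * ‖g u‖ := by
            refine integral_mono (hFint n).norm (hgint.norm.const_mul _) (fun u => ?_)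
            rw [norm_mul, Complex.norm_real]
            exact mul_le_mul_of_nonneg_right (hbnd n _) (norm_nonneg _)
        _ = a ^ n * ∫ u : ℝ, ‖g u‖ := integral_const_mul _ _
    have hswap := integral_tsum_of_summable_integral_norm hFint hFsum
    have hpt : ∀ u : ℝ,
        (∑' n : ℕ, ((a ^ n * Real.sin (b ^ n * π * (x + s * u)) : ℝ) : ℂ) * g u)
        = ((f (x + s * u) : ℝ) : ℂ) * g u := by
      intro u
      rw [tsum_mul_right]
      congr 1
      rw [hf]
      exact (Complex.ofReal_tsum _).symm
    simp only [hpt] at hswap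
    rw [← hswap]
    refine tsum_congr (fun n => ?_)
    rw [← integral_const_mul]
    congr 1 with u
    push_cast
    ring
  -- value of the integral at the special scales s = b⁻ᵐ
  have hJm : ∀ m : ℕ, (∫ u : ℝ, ((f (x + (b ^ m)⁻¹ * u) : ℝ) : ℂ) * g u)
      = ((a ^ m : ℝ) : ℂ)
        * (Complex.exp ((-(b ^ m * π * x) : ℝ) * Complex.I) * Complex.I / 2) := by
    intro m
    have hbm : (0:ℝ) < b ^ m := pow_pos hb0 m
    rw [hJ, tsum_eq_single m ?_]
    · rw [hT]
      have h1 : b ^ m * (b ^ m)⁻¹ / 2 = 1/2 := by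
        rw [mul_inv_cancel₀ hbm.ne']
      have h2 : φ (-(b ^ m * (b ^ m)⁻¹) / 2) = 0 := by
        refine hφval _ (Or.inl ?_)
        have h4 : (0:ℝ) < 1/(2*b) := by positivity
        have h3 : -(b ^ m * (b ^ m)⁻¹) / 2 ≤ 0 := by
          apply div_nonpos_of_nonpos_of_nonneg _ (by norm_num)
          simp [mul_inv_cancel₀ hbm.ne']
        linarith
      rw [h1, h2, hφhalf]
      ring
    · intro n hn
      have hneg : φ (-(b ^ n * (b ^ m)⁻¹) / 2) = 0 := by
        refine hφval _ (Or.inl ?_)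
        have h4 : (0:ℝ) < 1/(2*b) := by positivity
        have h3 : (0:ℝ) < b ^ n * (b ^ m)⁻¹ := by positivity
        have h5 : -(b ^ n * (b ^ m)⁻¹) / 2 ≤ 0 := by
          apply div_nonpos_of_nonpos_of_nonneg (by linarith) (by norm_num)
        linarith
      have hmain : φ (b ^ n * (b ^ m)⁻¹ / 2) = 0 := by
        rcases lt_or_gt_of_ne hn with h | h
        · refine hφval _ (Or.inl ?_)
          have hp : b ^ n * b ≤ b ^ m := by
            rw [← pow_succ]
            exact pow_le_pow_right₀ hb.le h
          rw [div_le_div_iff₀ two_pos (by positivity), one_mul]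
          calc b ^ n * (b ^ m)⁻¹ * (2 * b) = (b ^ n * b) * (b ^ m)⁻¹ * 2 := by ring
            _ ≤ b ^ m * (b ^ m)⁻¹ * 2 := by gcongr
            _ = 2 := by rw [mul_inv_cancel₀ hbm.ne', one_mul]
        · refine hφval _ (Or.inr ?_)
          have hp : b ^ m * b ≤ b ^ n := by
            rw [← pow_succ]
            exact pow_le_pow_right₀ hb.le h
          rw [div_le_div_iff₀ two_pos two_pos]
          calc b * 2 = (b ^ m * b) * (b ^ m)⁻¹ * 2 := by
                field_simp
            _ ≤ b ^ n * (b ^ m)⁻¹ * 2 := by gcongr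
      rw [hT, hneg, hmain]
      ring
  -- variants of the moment conditions with multiplication instead of smul
  have hugint' : Integrable (fun u : ℝ => (u:ℂ) * g u) := by
    simpa only [Complex.real_smul] using hugint
  have hug0' : (∫ u : ℝ, (u:ℂ) * g u) = 0 := by
    have := hug0
    simp only [Complex.real_smul] at this
    exact this
  -- ### the derivative side
  set R : ℝ → ℝ := fun t => f (x + t) - f x - t * L with hRdef
  have hR0 : R 0 = 0 := by simp [hRdef]
  have hRcont : Continuous R :=
    ((hfcont.comp (continuous_const.add continuous_id')).sub continuous_const).sub
      (continuous_id'.mul continuous_const)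
  have hlittle : R =o[𝓝 (0:ℝ)] fun t => t := by
    have h1 := hasDerivAt_iff_isLittleO_nhds_zero.mp hL
    have h2 : R = fun t => f (x + t) - f x - t • L := by
      funext t; rw [hRdef]; simp [smul_eq_mul]
    rw [h2]
    exact h1
  have hRdiv : Tendsto (fun t => R t / t) (𝓝 0) (𝓝 0) := hlittle.tendsto_div_nhds_zero
  obtain ⟨δ, hδ0, hδ⟩ : ∃ δ > 0, ∀ t : ℝ, |t| ≤ δ → |R t| ≤ |t| := by
    have h1 := hlittle.def one_pos
    rw [Metric.eventually_nhds_iff] at h1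
    obtain ⟨ε, hε, hball⟩ := h1
    refine ⟨ε/2, by linarith, fun t ht => ?_⟩
    have hd : dist t 0 < ε := by rw [Real.dist_eq, sub_zero]; linarith
    have := hball hd
    simpa [Real.norm_eq_abs] using this
  have hRbnd : ∀ t : ℝ, |R t| ≤ 2*M + |L| * |t| := by
    intro t
    have h1 := hM (x+t)
    have h2 := hM x
    rw [abs_le] at h1 h2
    have h3 : |t*L| = |L| * |t| := by rw [abs_mul]; ring
    have h4 := le_abs_self (t*L)
    have h5 := neg_abs_le (t*L)
    simp only [hRdef]
    rw [abs_le]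
    constructor
    · linarith [h1.1, h1.2, h2.1, h2.2, h4, h5, h3]
    · linarith [h1.1, h1.2, h2.1, h2.2, h4, h5, h3]
  set C : ℝ := 1 + 2*M/δ + |L| with hCdef
  have hC1 : 1 ≤ C := by
    have : 0 ≤ 2*M/δ := by positivity
    have := abs_nonneg L
    rw [hCdef]; linarith
  -- the uniform pointwise bound
  have hptbnd : ∀ (m : ℕ) (u : ℝ), |R ((b^m)⁻¹ * u) / (b^m)⁻¹| ≤ C * |u| := by
    intro m u
    have hbm : (0:ℝ) < b ^ m := pow_pos hb0 m
    have hsm : (0:ℝ) < (b^m)⁻¹ := by positivity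
    rw [abs_div, abs_of_pos hsm, div_le_iff₀ hsm]
    have h4 : |(b^m)⁻¹*u| = (b^m)⁻¹*|u| := by rw [abs_mul, abs_of_pos hsm]
    have hMδ : (0:ℝ) ≤ 2*M/δ := div_nonneg (by linarith) hδ0.le
    by_cases hcase : |(b^m)⁻¹*u| ≤ δ
    · have h1 := hδ _ hcase
      calc |R ((b^m)⁻¹*u)| ≤ (b^m)⁻¹*|u| := by rw [← h4]; exact h1
        _ = 1 * (|u| * (b^m)⁻¹) := by ring
        _ ≤ C * (|u| * (b^m)⁻¹) := by
            refine mul_le_mul_of_nonneg_right hC1 ?_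
            have := abs_nonneg u
            positivity
        _ = C * |u| * (b^m)⁻¹ := by ring
    · push_neg at hcase
      rw [h4] at hcase
      have h2 := hRbnd ((b^m)⁻¹*u)
      rw [h4] at h2
      have h5 : 2*M ≤ 2*M/δ * ((b^m)⁻¹*|u|) := by
        have h9 : 2*M/δ * δ ≤ 2*M/δ * ((b^m)⁻¹*|u|) :=
          mul_le_mul_of_nonneg_left hcase.le hMδ
        have h10 : 2*M/δ * δ = 2*M := by field_simp
        linarith
      have h8 : (0:ℝ) ≤ |u| := abs_nonneg u
      calc |R ((b^m)⁻¹*u)| ≤ 2*M + |L| * ((b^m)⁻¹*|u|) := h2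
        _ ≤ 2*M/δ * ((b^m)⁻¹*|u|) + |L| * ((b^m)⁻¹*|u|) := by linarith
        _ = (2*M/δ + |L|) * (|u| * (b^m)⁻¹) := by ring
        _ ≤ C * (|u| * (b^m)⁻¹) := by
            refine mul_le_mul_of_nonneg_right ?_ ?_
            · rw [hCdef]; linarith
            · positivity
        _ = C * |u| * (b^m)⁻¹ := by ring
  -- dominated convergence along the scales
  have sm_tendsto : Tendsto (fun m : ℕ => ((b:ℝ)^m)⁻¹) atTop (𝓝 0) := by
    simp_rw [← inv_pow]
    exact tendsto_pow_atTop_nhds_zero_of_lt_one (by positivity)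
      (inv_lt_one_of_one_lt₀ hb)
  have hDC : Tendsto (fun m : ℕ => ∫ u : ℝ, ((R ((b^m)⁻¹ * u) / (b^m)⁻¹ : ℝ) : ℂ) * g u)
      atTop (𝓝 (∫ _ : ℝ, (0:ℂ))) := by
    apply tendsto_integral_of_dominated_convergence (bound := fun u : ℝ => C * (‖u‖ * ‖g u‖))
    · intro m
      apply Continuous.aestronglyMeasurable
      exact (Complex.continuous_ofReal.comp
        ((hRcont.comp (continuous_const.mul continuous_id')).div_const _)).mul gS.continuous
    · exact hgnormint.const_mul C
    · intro m
      filter_upwards with u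
      rw [norm_mul, Complex.norm_real, Real.norm_eq_abs]
      calc |R ((b^m)⁻¹*u) / (b^m)⁻¹| * ‖g u‖ ≤ (C * |u|) * ‖g u‖ :=
            mul_le_mul_of_nonneg_right (hptbnd m u) (norm_nonneg _)
        _ = C * (‖u‖ * ‖g u‖) := by rw [Real.norm_eq_abs]; ring
    · filter_upwards with u
      by_cases hu : u = 0
      · have : ∀ m : ℕ, ((R ((b^m)⁻¹ * u) / (b^m)⁻¹ : ℝ) : ℂ) * g u = 0 := by
          intro m
          simp [hu, hR0]
        simp only [this]
        exact tendsto_const_nhds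
      · have h1 : Tendsto (fun m : ℕ => ((b:ℝ)^m)⁻¹ * u) atTop (𝓝 0) := by
          simpa using sm_tendsto.mul_const u
        have h2 : Tendsto (fun m : ℕ => R (((b:ℝ)^m)⁻¹*u) / (((b:ℝ)^m)⁻¹*u)) atTop (𝓝 0) :=
          hRdiv.comp h1
        have h3 : Tendsto (fun m : ℕ => R (((b:ℝ)^m)⁻¹*u) / (((b:ℝ)^m)⁻¹*u) * u)
            atTop (𝓝 0) := by
          simpa using h2.mul_const u
        have h4 : ∀ m : ℕ, R (((b:ℝ)^m)⁻¹*u) / ((b:ℝ)^m)⁻¹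
            = R (((b:ℝ)^m)⁻¹*u) / (((b:ℝ)^m)⁻¹*u) * u := by
          intro m
          have hbm : ((b:ℝ)^m) ≠ 0 := (pow_pos hb0 m).ne'
          field_simp
        have h5 : Tendsto (fun m : ℕ => ((R (((b:ℝ)^m)⁻¹*u) / ((b:ℝ)^m)⁻¹ : ℝ) : ℂ))
            atTop (𝓝 0) := by
          have h6 : Tendsto (fun t : ℝ => (t:ℂ)) (𝓝 0) (𝓝 0) := by
            simpa using Complex.continuous_ofReal.tendsto 0
          simp only [h4]
          exact h6.comp h3
        simpa using h5.mul_const (g u)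
  -- identify the integrals with the values computed via Fourier analysis
  have hfint : ∀ m : ℕ, Integrable
      (fun u : ℝ => ((f (x + (b^m)⁻¹ * u) : ℝ) : ℂ) * g u) := by
    intro m
    refine (hgint.norm.const_mul M).mono' ?_ ?_
    · apply Continuous.aestronglyMeasurable
      exact (Complex.continuous_ofReal.comp (hfcont.comp
        (continuous_const.add (continuous_const.mul continuous_id')))).mul gS.continuous
    · filter_upwards with u
      rw [norm_mul, Complex.norm_real, Real.norm_eq_abs]
      exact mul_le_mul_of_nonneg_right (hM _) (norm_nonneg _)
  have hid : ∀ m : ℕ, (∫ u : ℝ, ((R ((b^m)⁻¹ * u) / (b^m)⁻¹ : ℝ) : ℂ) * g u)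
      = ((b^m : ℝ) : ℂ) * (((a ^ m : ℝ) : ℂ)
        * (Complex.exp ((-(b ^ m * π * x) : ℝ) * Complex.I) * Complex.I / 2)) := by
    intro m
    have hbm : ((b:ℝ)^m) ≠ 0 := (pow_pos hb0 m).ne'
    have e1 : (fun u : ℝ => ((R ((b^m)⁻¹ * u) / (b^m)⁻¹ : ℝ) : ℂ) * g u)
        = fun u : ℝ => ((b^m : ℝ) : ℂ) * (((R ((b^m)⁻¹ * u) : ℝ) : ℂ) * g u) := by
      funext u
      have : R ((b^m)⁻¹ * u) / ((b:ℝ)^m)⁻¹ = (b:ℝ)^m * R ((b^m)⁻¹ * u) := by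
        field_simp
      rw [this]
      push_cast
      ring
    rw [e1, integral_const_mul]
    congr 1
    have hint3 : Integrable (fun u : ℝ => ((((b^m)⁻¹ * u * L) : ℝ) : ℂ) * g u) := by
      have e3 : (fun u : ℝ => ((((b^m)⁻¹ * u * L) : ℝ) : ℂ) * g u)
          = fun u : ℝ => ((((b:ℝ)^m)⁻¹ * L : ℝ) : ℂ) * ((u:ℂ) * g u) := by
        funext u; push_cast; ring
      rw [e3]
      exact hugint'.const_mul _
    have e2 : (fun u : ℝ => ((R ((b^m)⁻¹ * u) : ℝ) : ℂ) * g u)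
        = fun u : ℝ => ((f (x + (b^m)⁻¹ * u) : ℝ) : ℂ) * g u
          - ((f x : ℝ) : ℂ) * g u - ((((b^m)⁻¹ * u * L) : ℝ) : ℂ) * g u := by
      funext u
      rw [hRdef]
      push_cast
      ring
    rw [e2]
    have i2 : Integrable (fun u : ℝ =>
        ((f (x + (b^m)⁻¹ * u) : ℝ) : ℂ) * g u - ((f x : ℝ) : ℂ) * g u) :=
      (hfint m).sub (hgint.const_mul ((f x : ℝ) : ℂ))
    rw [integral_sub i2 hint3, integral_sub (hfint m) (hgint.const_mul ((f x : ℝ) : ℂ)),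
      integral_const_mul, hg0, mul_zero, sub_zero]
    have e4 : (fun u : ℝ => ((((b^m)⁻¹ * u * L) : ℝ) : ℂ) * g u)
        = fun u : ℝ => ((((b:ℝ)^m)⁻¹ * L : ℝ) : ℂ) * ((u:ℂ) * g u) := by
      funext u; push_cast; ring
    rw [e4, integral_const_mul, hug0', mul_zero, sub_zero]
    exact hJm m
  -- ### the contradiction
  have hnorm : ∀ m : ℕ,
      ‖∫ u : ℝ, ((R ((b^m)⁻¹ * u) / (b^m)⁻¹ : ℝ) : ℂ) * g u‖ = (a*b)^m / 2 := by
    intro m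
    have hbm : (0:ℝ) < b ^ m := pow_pos hb0 m
    have ham : (0:ℝ) < a ^ m := pow_pos ha0 m
    rw [hid m]
    rw [norm_mul, norm_mul, norm_div, norm_mul, Complex.norm_exp_ofReal_mul_I,
      Complex.norm_I, Complex.norm_real, Complex.norm_real, Real.norm_eq_abs,
      Real.norm_eq_abs, abs_of_pos hbm, abs_of_pos ham]
    have : ‖(2:ℂ)‖ = 2 := by norm_num
    rw [this, mul_pow]
    ring
  have hzero : Tendsto
      (fun m : ℕ => ‖∫ u : ℝ, ((R ((b^m)⁻¹ * u) / (b^m)⁻¹ : ℝ) : ℂ) * g u‖)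
      atTop (𝓝 0) := by
    have h0 : ‖∫ _ : ℝ, (0:ℂ)‖ = 0 := by simp
    have := hDC.norm
    rwa [h0] at this
  have hhalf : ∀ m : ℕ, (1:ℝ)/2
      ≤ ‖∫ u : ℝ, ((R ((b^m)⁻¹ * u) / (b^m)⁻¹ : ℝ) : ℂ) * g u‖ := by
    intro m
    rw [hnorm m]
    have : (1:ℝ) ≤ (a*b)^m := one_le_pow₀ hab
    linarith
  have hlt := hzero.eventually_lt_const (by norm_num : (0:ℝ) < 1/2)
  obtain ⟨m, hm⟩ := hlt.exists
  have := hhalf m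
  linarith
end

section
/- Let a and b be real numbers with 0 < a < 1, b > 1, and ab > 1, and set ξ = log(1/a)/log b, so 0 < ξ < 1. Then the function C(x) = ∑_{n=0}^∞ aⁿ cos(bⁿπx) satisfies C(x+h) − C(x) = O(|h|^ξ) as h → 0, uniformly in x; i.e. there exist constants K > 0 and δ > 0 such that |C(x+h) − C(x)| ≤ K|h|^ξ for all x ∈ ℝ and all h with 0 < |h| < δ. The same estimate holds for S(x) = ∑_{n=0}^∞ aⁿ sin(bⁿπx). -/
open Real Filter

lemma wh_cos_lip (u v : ℝ) : |Real.cos u - Real.cos v| ≤ |u - v| := by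
  rw [Real.cos_sub_cos]
  calc |(-2) * Real.sin ((u + v) / 2) * Real.sin ((u - v) / 2)|
      = 2 * |Real.sin ((u + v) / 2)| * |Real.sin ((u - v) / 2)| := by
        rw [abs_mul, abs_mul]; norm_num
    _ ≤ 2 * 1 * |(u - v) / 2| := by
        apply mul_le_mul
        · have := Real.abs_sin_le_one ((u + v) / 2)
          nlinarith [abs_nonneg (Real.sin ((u + v) / 2))]
        · exact Real.abs_sin_le_abs
        · exact abs_nonneg _
        · norm_num
    _ = |u - v| := by rw [abs_div, abs_two]; ring

lemma wh_sin_lip (u v : ℝ) : |Real.sin u - Real.sin v| ≤ |u - v| := by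
  rw [Real.sin_sub_sin]
  calc |2 * Real.sin ((u - v) / 2) * Real.cos ((u + v) / 2)|
      = 2 * |Real.sin ((u - v) / 2)| * |Real.cos ((u + v) / 2)| := by
        rw [abs_mul, abs_mul]; norm_num
    _ ≤ 2 * |(u - v) / 2| * 1 := by
        apply mul_le_mul
        · have := Real.abs_sin_le_abs (x := (u - v) / 2)
          nlinarith
        · exact Real.abs_cos_le_one _
        · exact abs_nonneg _
        · positivity
    _ = |u - v| := by rw [abs_div, abs_two]; ring

lemma wh_aux (a b ξ : ℝ) (ha0 : 0 < a) (ha1 : a < 1) (hb : 1 < b) (hab : 1 < a * b)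
    (hξ : ξ = Real.log (1 / a) / Real.log b)
    (f : ℝ → ℝ) (hf1 : ∀ u, |f u| ≤ 1) (hfl : ∀ u v, |f u - f v| ≤ |u - v|) :
    ∃ K > (0:ℝ), ∃ δ > (0:ℝ), ∀ x h : ℝ, 0 < |h| → |h| < δ →
      |(∑' n : ℕ, a ^ n * f (b ^ n * π * (x + h))) -
        ∑' n : ℕ, a ^ n * f (b ^ n * π * x)| ≤ K * |h| ^ ξ := by
  classical
  have hb0 : (0:ℝ) < b := lt_trans one_pos hb
  have hlb : 0 < Real.log b := Real.log_pos hb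
  have hab1 : 0 < a * b - 1 := by linarith
  have h1a : 0 < 1 - a := by linarith
  have hξ0 : 0 < ξ := by
    rw [hξ]
    exact div_pos (Real.log_pos ((one_lt_div ha0).mpr ha1)) hlb
  have hξ1 : ξ ≤ 1 := by
    rw [hξ, div_le_one hlb]
    apply Real.log_le_log (by positivity)
    rw [div_le_iff₀ ha0]
    nlinarith
  have hloga : Real.log a = Real.log b * (-ξ) := by
    have h2 : ξ * Real.log b = Real.log (1 / a) := by
      rw [hξ, div_mul_cancel₀ _ (ne_of_gt hlb)]
    rw [one_div, Real.log_inv] at h2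
    linarith
  have ha_eq : a = b ^ (-ξ) := by
    rw [Real.rpow_def_of_pos hb0, ← hloga, Real.exp_log ha0]
  refine ⟨π * b / (a * b - 1) + 2 / (1 - a), by positivity, 1, one_pos, ?_⟩
  intro x h hh0 hh1
  have hinv1 : 1 < |h|⁻¹ := (one_lt_inv₀ hh0).mpr hh1
  have hinv0 : 0 < |h|⁻¹ := by positivity
  obtain ⟨M, hM⟩ := pow_unbounded_of_one_lt (|h|⁻¹) hb
  have hex : ∃ n : ℕ, |h|⁻¹ ≤ b ^ n := ⟨M, hM.le⟩
  set N := Nat.find hex with hNdef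
  have hN : |h|⁻¹ ≤ b ^ N := Nat.find_spec hex
  have hN0 : N ≠ 0 := by
    intro h0
    rw [h0, pow_zero] at hN
    linarith
  have hNup : b ^ N ≤ b * |h|⁻¹ := by
    have hlt : ¬ |h|⁻¹ ≤ b ^ (N - 1) := Nat.find_min hex (Nat.pred_lt hN0)
    push_neg at hlt
    have hNsucc : b ^ N = b ^ (N - 1) * b := by
      conv_lhs => rw [← Nat.sub_add_cancel (Nat.one_le_iff_ne_zero.mpr hN0)]
      rw [pow_succ]
    rw [hNsucc]
    nlinarith [hlt.le]
  -- summability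
  have hgeo : Summable (fun n : ℕ => a ^ n) := summable_geometric_of_lt_one ha0.le ha1
  have habs : ∀ y : ℝ, ∀ n : ℕ, |a ^ n * f (b ^ n * π * y)| ≤ a ^ n := by
    intro y n
    rw [abs_mul, abs_pow, abs_of_pos ha0]
    exact mul_le_of_le_one_right (by positivity) (hf1 _)
  have hsum : ∀ y : ℝ, Summable (fun n : ℕ => a ^ n * f (b ^ n * π * y)) := by
    intro y
    apply Summable.of_norm
    refine Summable.of_nonneg_of_le (fun n => norm_nonneg _) (fun n => ?_) hgeo
    rw [Real.norm_eq_abs]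
    exact habs y n
  set u := fun n : ℕ => a ^ n * f (b ^ n * π * (x + h)) with hu
  set v := fun n : ℕ => a ^ n * f (b ^ n * π * x) with hv
  set m := fun n : ℕ => a ^ n * min 2 (b ^ n * π * |h|) with hmdef
  have hm_le : ∀ n, m n ≤ 2 * a ^ n := by
    intro n
    simp only [hmdef]
    calc a ^ n * min 2 (b ^ n * π * |h|) ≤ a ^ n * 2 :=
          mul_le_mul_of_nonneg_left (min_le_left _ _) (by positivity)
      _ = 2 * a ^ n := by ring
  have hm_nonneg : ∀ n, 0 ≤ m n := by
    intro n
    simp only [hmdef]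
    exact mul_nonneg (by positivity) (le_min (by norm_num) (by positivity))
  have hm_sum : Summable m :=
    Summable.of_nonneg_of_le hm_nonneg hm_le (hgeo.mul_left 2)
  have hdm : ∀ n, |u n - v n| ≤ m n := by
    intro n
    simp only [hu, hv, hmdef]
    have heq : a ^ n * f (b ^ n * π * (x + h)) - a ^ n * f (b ^ n * π * x)
        = a ^ n * (f (b ^ n * π * (x + h)) - f (b ^ n * π * x)) := by ring
    rw [heq, abs_mul, abs_pow, abs_of_pos ha0]
    apply mul_le_mul_of_nonneg_left _ (by positivity)
    apply le_min
    · calc |f (b ^ n * π * (x + h)) - f (b ^ n * π * x)|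
          ≤ |f (b ^ n * π * (x + h))| + |f (b ^ n * π * x)| := abs_sub _ _
        _ ≤ 2 := by linarith [hf1 (b ^ n * π * (x + h)), hf1 (b ^ n * π * x)]
    · calc |f (b ^ n * π * (x + h)) - f (b ^ n * π * x)|
          ≤ |b ^ n * π * (x + h) - b ^ n * π * x| := hfl _ _
        _ = b ^ n * π * |h| := by
            rw [show b ^ n * π * (x + h) - b ^ n * π * x = b ^ n * π * h by ring,
              abs_mul, abs_of_pos (by positivity : (0:ℝ) < b ^ n * π)]
  have hdsum : Summable (fun n => |u n - v n|) :=
    Summable.of_nonneg_of_le (fun n => abs_nonneg _) hdm hm_sum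
  have hstep1 : |(∑' n, u n) - ∑' n, v n| ≤ ∑' n, m n := by
    have hsu : Summable u := hsum (x + h)
    have hsv : Summable v := hsum x
    rw [← Summable.tsum_sub hsu hsv]
    calc |∑' n, (u n - v n)| ≤ ∑' n, |u n - v n| := by
          simpa [Real.norm_eq_abs] using
            norm_tsum_le_tsum_norm (f := fun n => u n - v n)
              (by simpa [Real.norm_eq_abs] using hdsum)
      _ ≤ ∑' n, m n := Summable.tsum_le_tsum hdm hdsum hm_sum
  have hsplit : ∑' n, m n = (∑ n ∈ Finset.range N, m n) + ∑' n, m (n + N) :=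
    (Summable.sum_add_tsum_nat_add N hm_sum).symm
  have hhead : (∑ n ∈ Finset.range N, m n) ≤ π * ((a * b) ^ N * |h|) / (a * b - 1) := by
    calc (∑ n ∈ Finset.range N, m n)
        ≤ ∑ n ∈ Finset.range N, (a * b) ^ n * (π * |h|) := by
          apply Finset.sum_le_sum
          intro n _
          simp only [hmdef]
          calc a ^ n * min 2 (b ^ n * π * |h|) ≤ a ^ n * (b ^ n * π * |h|) :=
                mul_le_mul_of_nonneg_left (min_le_right _ _) (by positivity)
            _ = (a * b) ^ n * (π * |h|) := by rw [mul_pow]; ring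
      _ = (∑ n ∈ Finset.range N, (a * b) ^ n) * (π * |h|) := by
          rw [Finset.sum_mul]
      _ = ((a * b) ^ N - 1) / (a * b - 1) * (π * |h|) := by
          rw [geom_sum_eq (by linarith : a * b ≠ 1)]
      _ ≤ (a * b) ^ N / (a * b - 1) * (π * |h|) := by
          gcongr
          linarith
      _ = π * ((a * b) ^ N * |h|) / (a * b - 1) := by ring
  have htail : (∑' n, m (n + N)) ≤ 2 * a ^ N / (1 - a) := by
    have hle : (∑' n, m (n + N)) ≤ ∑' n : ℕ, (2 * a ^ N) * a ^ n := by
      apply Summable.tsum_le_tsum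
      · intro n
        calc m (n + N) ≤ 2 * a ^ (n + N) := hm_le _
          _ = (2 * a ^ N) * a ^ n := by rw [pow_add]; ring
      · exact (summable_nat_add_iff N).mpr hm_sum
      · exact hgeo.mul_left _
    calc (∑' n, m (n + N)) ≤ ∑' n : ℕ, (2 * a ^ N) * a ^ n := hle
      _ = (2 * a ^ N) * (1 - a)⁻¹ := by
          rw [tsum_mul_left, tsum_geometric_of_lt_one ha0.le ha1]
      _ = 2 * a ^ N / (1 - a) := by ring
  have hbN_rpow : (b : ℝ) ^ N = b ^ (N : ℝ) := (Real.rpow_natCast b N).symm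
  have hbNinv : (b ^ N)⁻¹ ≤ |h| := by
    have := inv_anti₀ hinv0 hN
    rwa [inv_inv] at this
  have E2 : a ^ N ≤ |h| ^ ξ := by
    have h1 : a ^ N = (b ^ (-(N : ℝ))) ^ ξ := by
      rw [ha_eq, ← Real.rpow_natCast (b ^ (-ξ)) N, ← Real.rpow_mul hb0.le,
        ← Real.rpow_mul hb0.le]
      congr 1
      ring
    rw [h1]
    apply Real.rpow_le_rpow (by positivity) _ hξ0.le
    rw [Real.rpow_neg hb0.le, ← hbN_rpow]
    exact hbNinv
  have E1 : (a * b) ^ N * |h| ≤ b * |h| ^ ξ := by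
    have hab_eq : a * b = b ^ (1 - ξ) := by
      rw [show (1 - ξ) = 1 + (-ξ) by ring, Real.rpow_add hb0, Real.rpow_one, ha_eq]
      ring
    have h1 : (a * b) ^ N = (b ^ (N : ℝ)) ^ (1 - ξ) := by
      rw [hab_eq, ← Real.rpow_natCast (b ^ (1 - ξ)) N, ← Real.rpow_mul hb0.le,
        ← Real.rpow_mul hb0.le]
      congr 1
      ring
    have h2 : (b ^ (N : ℝ)) ^ (1 - ξ) ≤ (b * |h|⁻¹) ^ (1 - ξ) := by
      apply Real.rpow_le_rpow (by positivity) _ (by linarith)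
      rw [← hbN_rpow]; exact hNup
    have h3 : (b * |h|⁻¹) ^ (1 - ξ) = b ^ (1 - ξ) * |h| ^ (ξ - 1) := by
      rw [Real.mul_rpow hb0.le (by positivity), ← Real.rpow_neg_one |h|,
        ← Real.rpow_mul (abs_nonneg h)]
      congr 2
      ring
    have h4 : b ^ (1 - ξ) ≤ b := by
      nth_rewrite 2 [← Real.rpow_one b]
      exact Real.rpow_le_rpow_of_exponent_le hb.le (by linarith)
    have hmulexp : |h| ^ (ξ - 1) * |h| ^ (1:ℝ) = |h| ^ ξ := by
      rw [← Real.rpow_add hh0]; congr 1; ring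
    have hne : 0 ≤ |h| ^ (ξ - 1) := Real.rpow_nonneg (abs_nonneg h) _
    calc (a * b) ^ N * |h| = (b ^ (N : ℝ)) ^ (1 - ξ) * |h| := by rw [h1]
      _ ≤ b ^ (1 - ξ) * |h| ^ (ξ - 1) * |h| := by
          rw [← h3]
          exact mul_le_mul_of_nonneg_right h2 (abs_nonneg h)
      _ ≤ b * |h| ^ (ξ - 1) * |h| :=
          mul_le_mul_of_nonneg_right (mul_le_mul_of_nonneg_right h4 hne) (abs_nonneg h)
      _ = b * (|h| ^ (ξ - 1) * |h| ^ (1:ℝ)) := by rw [Real.rpow_one]; ring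
      _ = b * |h| ^ ξ := by rw [hmulexp]
  calc |(∑' n, u n) - ∑' n, v n| ≤ ∑' n, m n := hstep1
    _ = (∑ n ∈ Finset.range N, m n) + ∑' n, m (n + N) := hsplit
    _ ≤ π * ((a * b) ^ N * |h|) / (a * b - 1) + 2 * a ^ N / (1 - a) :=
        add_le_add hhead htail
    _ ≤ π * (b * |h| ^ ξ) / (a * b - 1) + 2 * |h| ^ ξ / (1 - a) := by
        gcongr
    _ = (π * b / (a * b - 1) + 2 / (1 - a)) * |h| ^ ξ := by ring

/-- Hardy's theorem: for `0 < a < 1`, `b > 1` with `a * b > 1` and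
`ξ = log(1/a)/log b`, the Weierstrass functions satisfy a uniform Hölder
condition of order `ξ`: `f(x+h) - f(x) = O(|h|^ξ)` uniformly in `x`. -/
theorem weierstrass_holder_estimate
    (a b ξ : ℝ) (ha0 : 0 < a) (ha1 : a < 1) (hb : 1 < b) (hab : 1 < a * b)
    (hξ : ξ = Real.log (1 / a) / Real.log b) :
    (∃ K > (0:ℝ), ∃ δ > (0:ℝ), ∀ x h : ℝ, 0 < |h| → |h| < δ →
      |(∑' n : ℕ, a ^ n * Real.cos (b ^ n * π * (x + h))) -
        ∑' n : ℕ, a ^ n * Real.cos (b ^ n * π * x)| ≤ K * |h| ^ ξ) ∧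
    (∃ K > (0:ℝ), ∃ δ > (0:ℝ), ∀ x h : ℝ, 0 < |h| → |h| < δ →
      |(∑' n : ℕ, a ^ n * Real.sin (b ^ n * π * (x + h))) -
        ∑' n : ℕ, a ^ n * Real.sin (b ^ n * π * x)| ≤ K * |h| ^ ξ) := by
  constructor
  · exact wh_aux a b ξ ha0 ha1 hb hab hξ Real.cos (fun u => Real.abs_cos_le_one u) wh_cos_lip
  · exact wh_aux a b ξ ha0 ha1 hb hab hξ Real.sin (fun u => Real.abs_sin_le_one u) wh_sin_lip
end

section
/- Let a and b be real numbers with 0 < a < 1, b > 1, ab ≥ 1 and a(b + 1) < 2. Then the Weierstrass sine function S(x) = ∑_{n=0}^∞ aⁿ sin(bⁿπx) has differential coefficient +∞ at x = 0; that is, (S(h) − S(0))/h → +∞ as h → 0 through nonzero values. -/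
open Real Filter Topology

lemma hardy_summable (a b : ℝ) (ha0 : 0 ≤ a) (ha1 : a < 1) (x : ℝ) :
    Summable (fun n : ℕ => a ^ n * Real.sin (b ^ n * π * x)) := by
  apply Summable.of_norm
  apply Summable.of_nonneg_of_le (fun n => norm_nonneg _) (fun n => ?_)
    (summable_geometric_of_lt_one ha0 ha1)
  rw [norm_mul, norm_pow, Real.norm_eq_abs, Real.norm_eq_abs, abs_of_nonneg ha0]
  calc a ^ n * |Real.sin (b ^ n * π * x)| ≤ a ^ n * 1 := by
        gcongr; exact Real.abs_sin_le_one _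
    _ = a ^ n := mul_one _

set_option maxHeartbeats 1000000 in
/-- The key estimate in Hardy's argument. -/
lemma hardy_key (a b : ℝ) (ha0 : 0 < a) (ha1 : a < 1) (hb : 1 < b) (hab : 1 ≤ a * b)
    (hab2 : a * (b + 1) < 2) (N : ℕ) (h : ℝ) (hh : 0 < h)
    (h1 : b ^ N * h ≤ a * (b - 1) / (4 * (1 - a)))
    (h2 : a * (b - 1) / (4 * (1 - a)) < b ^ (N + 1) * h) :
    (2 - 4 * (a * b - 1) / (a * (b - 1))) * (N + 1) - 4 / (a * (b - 1)) ≤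
      (∑' n : ℕ, a ^ n * Real.sin (b ^ n * π * h)) / h := by
  have ha1' : 0 < 1 - a := by linarith
  have hb1 : 0 < b - 1 := by linarith
  have hab1 : 0 < a * (b - 1) := by positivity
  set θ : ℝ := a * (b - 1) / (4 * (1 - a)) with hθdef
  have hθ0 : 0 < θ := by positivity
  have hθ2 : θ ≤ 1 / 2 := by
    rw [hθdef, div_le_div_iff₀ (by positivity) (by norm_num)]
    nlinarith
  set r := a * b with hrdef
  -- head bound
  have hhead : ∀ n ∈ Finset.range (N + 1),
      2 * r ^ n * h ≤ a ^ n * Real.sin (b ^ n * π * h) := by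
    intro n hn
    rw [Finset.mem_range, Nat.lt_succ_iff] at hn
    have hbn : b ^ n * h ≤ θ := le_trans (by gcongr; exact hb.le) h1
    have hbn0 : 0 ≤ b ^ n * h := by positivity
    have hsin : 2 / π * (b ^ n * π * h) ≤ Real.sin (b ^ n * π * h) := by
      apply Real.mul_le_sin
      · positivity
      · calc b ^ n * π * h = (b ^ n * h) * π := by ring
          _ ≤ (1 / 2) * π := by gcongr; exact le_trans hbn hθ2
          _ = π / 2 := by ring
    have hπ : (0:ℝ) < π := Real.pi_pos
    have : 2 / π * (b ^ n * π * h) = 2 * b ^ n * h := by field_simp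
    rw [this] at hsin
    calc 2 * r ^ n * h = a ^ n * (2 * b ^ n * h) := by rw [hrdef, mul_pow]; ring
      _ ≤ a ^ n * Real.sin (b ^ n * π * h) := mul_le_mul_of_nonneg_left hsin (pow_nonneg ha0.le n)
  -- split the sum
  have hsum := hardy_summable a b ha0.le ha1 h
  have hsplit := Summable.sum_add_tsum_nat_add (N + 1) hsum
  -- tail bound
  have htail : -(a ^ (N + 1) / (1 - a)) ≤
      ∑' n : ℕ, a ^ (n + (N + 1)) * Real.sin (b ^ (n + (N + 1)) * π * h) := by
    have hs2 : Summable (fun n : ℕ => a ^ (n + (N + 1)) *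
        Real.sin (b ^ (n + (N + 1)) * π * h)) :=
      ((summable_nat_add_iff (N + 1)).2 hsum)
    have hs3 : Summable (fun n : ℕ => -(a ^ (n + (N + 1)))) := by
      apply Summable.neg
      simpa [pow_add] using (summable_geometric_of_lt_one ha0.le ha1).mul_right (a ^ (N + 1))
    have hpt : ∀ n : ℕ, -(a ^ (n + (N + 1))) ≤
        a ^ (n + (N + 1)) * Real.sin (b ^ (n + (N + 1)) * π * h) := by
      intro n
      have habs : |a ^ (n + (N + 1)) * Real.sin (b ^ (n + (N + 1)) * π * h)| ≤
          a ^ (n + (N + 1)) := by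
        rw [abs_mul, abs_pow, abs_of_nonneg ha0.le]
        calc a ^ (n + (N + 1)) * |Real.sin _| ≤ a ^ (n + (N + 1)) * 1 := by
              gcongr; exact Real.abs_sin_le_one _
          _ = _ := mul_one _
      linarith [neg_abs_le (a ^ (n + (N + 1)) * Real.sin (b ^ (n + (N + 1)) * π * h))]
    have hle := Summable.tsum_le_tsum hpt hs3 hs2
    refine le_trans (le_of_eq ?_) hle
    rw [tsum_neg]
    congr 1
    have hfun : ∀ n : ℕ, a ^ (n + (N + 1)) = a ^ n * a ^ (N + 1) := fun n => pow_add a n (N + 1)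
    rw [funext hfun, tsum_mul_right, tsum_geometric_of_lt_one ha0.le ha1,
      inv_mul_eq_div, div_eq_div_iff (by linarith) (by linarith)]
  have hheadsum : (∑ n ∈ Finset.range (N + 1), 2 * r ^ n * h) ≤
      ∑ n ∈ Finset.range (N + 1), a ^ n * Real.sin (b ^ n * π * h) :=
    Finset.sum_le_sum hhead
  have hS : (2 * ∑ n ∈ Finset.range (N + 1), r ^ n) * h - a ^ (N + 1) / (1 - a) ≤
      ∑' n : ℕ, a ^ n * Real.sin (b ^ n * π * h) := by
    rw [← hsplit]
    have : (2 * ∑ n ∈ Finset.range (N + 1), r ^ n) * h =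
        ∑ n ∈ Finset.range (N + 1), 2 * r ^ n * h := by
      rw [mul_assoc, Finset.sum_mul, Finset.mul_sum]
      exact Finset.sum_congr rfl (fun n _ => by ring)
    rw [this]
    linarith
  -- divide by h
  have hG : (N : ℝ) + 1 ≤ ∑ n ∈ Finset.range (N + 1), r ^ n := by
    have := Finset.card_nsmul_le_sum (Finset.range (N + 1)) (fun n => r ^ n) 1
      (fun n _ => one_le_pow₀ hab)
    simpa [nsmul_eq_mul] using this
  have hgeom : (∑ n ∈ Finset.range (N + 1), r ^ n) * (r - 1) = r ^ (N + 1) - 1 :=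
    geom_sum_mul r (N + 1)
  -- tail/h bound : a^(N+1)/((1-a)*h) ≤ (4/(a*(b-1))) * r^(N+1)
  have htb : a ^ (N + 1) / (1 - a) / h ≤ 4 / (a * (b - 1)) * r ^ (N + 1) := by
    rw [div_div, div_le_iff₀ (by positivity)]
    have key : a ^ (N + 1) * θ ≤ a ^ (N + 1) * (b ^ (N + 1) * h) :=
      mul_le_mul_of_nonneg_left h2.le (by positivity)
    have hrN : r ^ (N + 1) = a ^ (N + 1) * b ^ (N + 1) := mul_pow a b (N + 1)
    rw [hrdef] at hrN ⊢
    have hθ' : (1 - a) * θ = a * (b - 1) / 4 := by rw [hθdef]; field_simp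
    have h4 : 4 / (a * (b - 1)) * ((1 - a) * θ) = 1 := by rw [hθ']; field_simp
    calc a ^ (N + 1) = a ^ (N + 1) * (4 / (a * (b - 1)) * ((1 - a) * θ)) := by rw [h4, mul_one]
      _ = 4 / (a * (b - 1)) * (a ^ (N + 1) * θ) * (1 - a) := by ring
      _ ≤ 4 / (a * (b - 1)) * (a ^ (N + 1) * (b ^ (N + 1) * h)) * (1 - a) :=
          mul_le_mul_of_nonneg_right (mul_le_mul_of_nonneg_left key (by positivity))
            (by linarith)
      _ = 4 / (a * (b - 1)) * ((a * b) ^ (N + 1)) * ((1 - a) * h) := by rw [hrN]; ring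
  have hdiv : 2 * (∑ n ∈ Finset.range (N + 1), r ^ n) - 4 / (a * (b - 1)) * r ^ (N + 1) ≤
      (∑' n : ℕ, a ^ n * Real.sin (b ^ n * π * h)) / h := by
    rw [← sub_nonneg] at hS ⊢
    have := div_nonneg (by linarith : (0:ℝ) ≤ (∑' n : ℕ, a ^ n * Real.sin (b ^ n * π * h)) -
      ((2 * ∑ n ∈ Finset.range (N + 1), r ^ n) * h - a ^ (N + 1) / (1 - a))) hh.le
    rw [sub_div, sub_div, mul_div_cancel_right₀ _ hh.ne'] at this
    linarith
  refine le_trans ?_ hdiv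
  -- final algebra
  set G := ∑ n ∈ Finset.range (N + 1), r ^ n with hGdef
  set K := 4 / (a * (b - 1)) with hKdef
  have hK0 : 0 < K := by positivity
  have hKr : K * (r - 1) ≤ 2 - (2 - 4 * (a * b - 1) / (a * (b - 1))) :=
    le_of_eq (by rw [hKdef, hrdef]; ring)
  have hε0 : 0 ≤ 2 - 4 * (a * b - 1) / (a * (b - 1)) := by
    rw [sub_nonneg, div_le_iff₀ (by positivity)]
    nlinarith
  have hrN1 : K * r ^ (N + 1) = K + K * (r - 1) * G := by
    have h' : r ^ (N + 1) = G * (r - 1) + 1 := by linarith [hgeom]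
    rw [h']; ring
  nlinarith [mul_le_mul_of_nonneg_left hG hε0, mul_le_mul_of_nonneg_right hKr
    (le_trans (by positivity : (0:ℝ) ≤ (N:ℝ) + 1) hG)]

/-- Hardy's theorem: for `0 < a < 1`, `b > 1` with `a * b ≥ 1` and `a(b+1) < 2`,
the Weierstrass sine function has differential coefficient `+∞` at `x = 0`. -/
theorem weierstrass_sin_deriv_infinite_at_zero
    (a b : ℝ) (ha0 : 0 < a) (ha1 : a < 1) (hb : 1 < b) (hab : 1 ≤ a * b)
    (hab2 : a * (b + 1) < 2) :
    Tendsto (fun h : ℝ =>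
        ((∑' n : ℕ, a ^ n * Real.sin (b ^ n * π * h)) -
          ∑' n : ℕ, a ^ n * Real.sin (b ^ n * π * 0)) / h)
      (𝓝[≠] 0) atTop := by
  have ha1' : 0 < 1 - a := by linarith
  have hb1 : 0 < b - 1 := by linarith
  set θ : ℝ := a * (b - 1) / (4 * (1 - a)) with hθdef
  have hθ0 : 0 < θ := by positivity
  have hzero : (∑' n : ℕ, a ^ n * Real.sin (b ^ n * π * 0)) = 0 := by
    simp
  rw [tendsto_atTop]
  intro M
  set K := 4 / (a * (b - 1)) with hKdef
  set ε := 2 - 4 * (a * b - 1) / (a * (b - 1)) with hεdef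
  have hε0 : 0 < ε := by
    rw [hεdef, sub_pos, div_lt_iff₀ (by positivity)]
    nlinarith
  obtain ⟨N₀, hN₀⟩ : ∃ N₀ : ℕ, M + K ≤ ε * (N₀ + 1) := by
    obtain ⟨N₀, hN₀⟩ := exists_nat_ge ((M + K) / ε)
    exact ⟨N₀, by rw [div_le_iff₀ hε0] at hN₀; nlinarith [hε0]⟩
  have hδ0 : 0 < θ / b ^ N₀ := by positivity
  filter_upwards [inter_mem_nhdsWithin {0}ᶜ
    (Metric.ball_mem_nhds (0:ℝ) hδ0)] with h hh
  obtain ⟨hne, hball⟩ := hh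
  rw [Set.mem_compl_iff, Set.mem_singleton_iff] at hne
  rw [Metric.mem_ball, Real.dist_eq, sub_zero] at hball
  rw [hzero, sub_zero]
  -- reduce to |h|
  set t := |h| with htdef
  have ht0 : 0 < t := abs_pos.2 hne
  have heven : (∑' n : ℕ, a ^ n * Real.sin (b ^ n * π * h)) / h =
      (∑' n : ℕ, a ^ n * Real.sin (b ^ n * π * t)) / t := by
    rcases abs_cases h with ⟨he, _⟩ | ⟨he, hneg⟩
    · rw [htdef, he]
    · rw [htdef, he]
      have : (fun n : ℕ => a ^ n * Real.sin (b ^ n * π * (-h))) =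
          fun n : ℕ => -(a ^ n * Real.sin (b ^ n * π * h)) := by
        ext n; rw [mul_neg, Real.sin_neg]; ring
      rw [this, tsum_neg, neg_div_neg_eq]
  rw [heven]
  -- find N
  have htδ : t < θ / b ^ N₀ := hball
  obtain ⟨m, hm⟩ := pow_unbounded_of_one_lt (θ / t) hb
  have hP : ∃ n : ℕ, θ < b ^ n * t := ⟨m, by rwa [div_lt_iff₀ ht0] at hm⟩
  classical
  have hPn₁ : θ < b ^ (Nat.find hP) * t := Nat.find_spec hP
  have hlarge : N₀ < Nat.find hP := by
    rw [Nat.lt_find_iff]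
    intro k hk
    rw [not_lt]
    calc b ^ k * t ≤ b ^ N₀ * t := by gcongr; linarith
      _ ≤ b ^ N₀ * (θ / b ^ N₀) := by gcongr
      _ = θ := by field_simp
  set N : ℕ := Nat.find hP - 1 with hNdef
  have hfind : Nat.find hP = N + 1 := by omega
  rw [hfind] at hPn₁
  have hNle : b ^ N * t ≤ θ := by
    have := Nat.find_min hP (m := N) (by omega)
    linarith [not_lt.1 this]
  have hkey := hardy_key a b ha0 ha1 hb hab hab2 N t ht0 hNle hPn₁
  have hN0N : (N₀ : ℝ) + 1 ≤ (N : ℝ) + 1 := by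
    have hNN : N₀ ≤ N := by omega
    have : (N₀ : ℝ) ≤ (N : ℝ) := by exact_mod_cast hNN
    linarith
  calc M ≤ ε * (N₀ + 1) - K := by linarith
    _ ≤ ε * (N + 1) - K := by nlinarith
    _ ≤ _ := hkey
end

section
/- (Hardy–Littlewood differentiation lemma) Let y₀ > 0, let λ > 0, let p be a positive integer, and let f : (0, y₀] → ℂ be a function possessing a p-th derivative f^(p) which is continuous on (0, y₀]. Suppose that f(y) = o(y^{−λ}) as y → 0+ and that f^(p)(y) = O(y^{−p−λ}) as y → 0+. Then for every integer q with 0 < q < p, one has f^(q)(y) = o(y^{−q−λ}) as y → 0+. -/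
open Real Filter Topology Asymptotics

lemma hl_O_step (b : ℝ) (hb : 0 < b) (g g' : ℝ → ℂ) (ρ C : ℝ) (hρ : 1 < ρ) (hC : 0 ≤ C)
    (hder : ∀ t ∈ Set.Ioc (0:ℝ) b, HasDerivAt g (g' t) t)
    (hcont : ContinuousOn g' (Set.Ioc 0 b))
    (hbd : ∀ t ∈ Set.Ioc (0:ℝ) b, ‖g' t‖ ≤ C * t ^ (-ρ)) :
    ∃ C' : ℝ, 0 ≤ C' ∧ ∀ y ∈ Set.Ioc (0:ℝ) b, ‖g y‖ ≤ C' * y ^ (1 - ρ) := by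
  have hρ1 : 0 < ρ - 1 := by linarith
  refine ⟨‖g b‖ * b ^ (ρ - 1) + C / (ρ - 1), by positivity, ?_⟩
  rintro y ⟨hy0, hyb⟩
  have hsub : Set.uIcc y b ⊆ Set.Ioc (0:ℝ) b := by
    rw [Set.uIcc_of_le hyb]
    exact fun t ht => ⟨lt_of_lt_of_le hy0 ht.1, ht.2⟩
  have hint : IntervalIntegrable g' MeasureTheory.volume y b :=
    (hcont.mono hsub).intervalIntegrable
  have hftc : ∫ t in y..b, g' t = g b - g y :=
    intervalIntegral.integral_eq_sub_of_hasDerivAt (fun t ht => hder t (hsub ht)) hint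
  have hintb : IntervalIntegrable (fun t : ℝ => C * t ^ (-ρ)) MeasureTheory.volume y b := by
    apply ContinuousOn.intervalIntegrable
    apply ContinuousOn.mul continuousOn_const
    intro t ht
    exact (Real.continuousAt_rpow_const t (-ρ) (Or.inl (ne_of_gt (hsub ht).1))).continuousWithinAt
  have hnorm : ‖∫ t in y..b, g' t‖ ≤ |∫ t in y..b, C * t ^ (-ρ)| := by
    apply intervalIntegral.norm_integral_le_abs_of_norm_le ?_ hintb
    filter_upwards [MeasureTheory.ae_restrict_mem measurableSet_uIoc] with t ht
    exact hbd t (hsub (Set.uIoc_subset_uIcc ht))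
  have hval : ∫ t in y..b, C * t ^ (-ρ) = C * ((b ^ (-ρ + 1) - y ^ (-ρ + 1)) / (-ρ + 1)) := by
    rw [intervalIntegral.integral_const_mul, integral_rpow]
    right
    exact ⟨by intro h; linarith [h], fun h0 => absurd (hsub h0).1 (lt_irrefl 0)⟩
  have hmon : b ^ (-ρ+1) ≤ y ^ (-ρ+1) :=
    Real.rpow_le_rpow_of_nonpos hy0 hyb (by linarith)
  have hb1 : (0:ℝ) < b ^ (-ρ+1) := Real.rpow_pos_of_pos hb _
  have hy1 : (0:ℝ) < y ^ (-ρ+1) := Real.rpow_pos_of_pos hy0 _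
  have hineq : |∫ t in y..b, C * t ^ (-ρ)| ≤ C / (ρ - 1) * y ^ (1 - ρ) := by
    rw [hval, abs_mul, abs_of_nonneg hC, abs_div,
      abs_of_nonpos (by linarith : b ^ (-ρ+1) - y ^ (-ρ+1) ≤ 0),
      abs_of_nonpos (by linarith : -ρ + 1 ≤ 0)]
    have key : -(b ^ (-ρ+1) - y ^ (-ρ+1)) / -(-ρ+1) ≤ y ^ (1-ρ) / (ρ-1) := by
      rw [show -(-ρ+1) = ρ - 1 by ring, neg_sub, show (1:ℝ)-ρ = -ρ+1 by ring]
      gcongr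
      linarith
    calc C * (-(b ^ (-ρ+1) - y ^ (-ρ+1)) / -(-ρ+1)) ≤ C * (y ^ (1-ρ) / (ρ-1)) :=
        mul_le_mul_of_nonneg_left key hC
    _ = C / (ρ - 1) * y ^ (1 - ρ) := by ring
  have hgyb : ‖g b‖ ≤ ‖g b‖ * b ^ (ρ - 1) * y ^ (1 - ρ) := by
    have h1 : b ^ (1-ρ) ≤ y ^ (1-ρ) :=
      Real.rpow_le_rpow_of_nonpos hy0 hyb (by linarith)
    have h2 : b ^ (ρ-1) * b ^ (1-ρ) = 1 := by
      rw [← Real.rpow_add hb]; norm_num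
    calc ‖g b‖ = ‖g b‖ * (b ^ (ρ-1) * b ^ (1-ρ)) := by rw [h2, mul_one]
    _ ≤ ‖g b‖ * b ^ (ρ - 1) * y ^ (1 - ρ) := by
        rw [← mul_assoc]
        exact mul_le_mul_of_nonneg_left h1 (by positivity)
  have : ‖g y‖ ≤ ‖g b‖ + C / (ρ - 1) * y ^ (1 - ρ) := by
    have := hnorm.trans hineq
    rw [hftc] at this
    calc ‖g y‖ = ‖g b - (g b - g y)‖ := by ring_nf
    _ ≤ ‖g b‖ + ‖g b - g y‖ := norm_sub_le _ _
    _ ≤ ‖g b‖ + C / (ρ - 1) * y ^ (1 - ρ) := by linarith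
  calc ‖g y‖ ≤ ‖g b‖ + C / (ρ - 1) * y ^ (1 - ρ) := this
  _ ≤ ‖g b‖ * b ^ (ρ - 1) * y ^ (1 - ρ) + C / (ρ - 1) * y ^ (1 - ρ) := by linarith
  _ = (‖g b‖ * b ^ (ρ - 1) + C / (ρ - 1)) * y ^ (1 - ρ) := by ring

lemma hl_o_step (b : ℝ) (hb : 0 < b) (g g' g'' : ℝ → ℂ) (μ C : ℝ) (hμ : 0 < μ) (hC : 0 ≤ C)
    (hder : ∀ t ∈ Set.Ioc (0:ℝ) b, HasDerivAt g (g' t) t)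
    (hder' : ∀ t ∈ Set.Ioc (0:ℝ) b, HasDerivAt g' (g'' t) t)
    (hbd : ∀ t ∈ Set.Ioc (0:ℝ) b, ‖g'' t‖ ≤ C * t ^ (-(μ+2)))
    (ho : g =o[𝓝[>] (0:ℝ)] fun y : ℝ => y ^ (-μ)) :
    g' =o[𝓝[>] (0:ℝ)] fun y : ℝ => y ^ (-(μ+1)) := by
  rw [isLittleO_iff]
  intro ε hε
  set δ : ℝ := min 1 (ε/(2*C+2)) with hδdef
  have hδ : 0 < δ := lt_min one_pos (by positivity)
  have hδ1 : δ ≤ 1 := min_le_left _ _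
  have hδC : C * δ ≤ ε / 2 := by
    have h1 : δ ≤ ε/(2*C+2) := min_le_right _ _
    have h2 : C * δ ≤ C * (ε/(2*C+2)) := mul_le_mul_of_nonneg_left h1 hC
    have h3 : C * (ε/(2*C+2)) ≤ ε/2 := by
      have h2C : (0:ℝ) < 2*C+2 := by linarith
      rw [mul_div_assoc', div_le_div_iff₀ h2C two_pos]
      nlinarith
    linarith
  have hE := isLittleO_iff.mp ho (show (0:ℝ) < ε*δ/4 by positivity)
  obtain ⟨u, hu, husub⟩ := mem_nhdsGT_iff_exists_Ioc_subset.mp hE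
  rw [Set.mem_Ioi] at hu
  set y₁ : ℝ := min (b/2) (u/2) with hy₁def
  have hy₁ : 0 < y₁ := lt_min (by linarith) (by linarith)
  have hmem : Set.Ioc (0:ℝ) y₁ ∈ 𝓝[>] (0:ℝ) :=
    Ioc_mem_nhdsGT_of_mem ⟨le_refl 0, hy₁⟩
  filter_upwards [hmem] with y hy
  obtain ⟨hy0, hyy₁⟩ := hy
  have hyb : y ≤ b/2 := hyy₁.trans (min_le_left _ _)
  have hyu : y ≤ u/2 := hyy₁.trans (min_le_right _ _)
  set h : ℝ := δ * y with hhdef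
  have hh : 0 < h := by positivity
  have hhy : h ≤ y := by nlinarith
  have hIsub : Set.Icc y (y+h) ⊆ Set.Ioc (0:ℝ) b :=
    fun t ht => ⟨lt_of_lt_of_le hy0 ht.1, by nlinarith [ht.2]⟩
  have hIu : Set.Icc y (y+h) ⊆ Set.Ioc (0:ℝ) u :=
    fun t ht => ⟨lt_of_lt_of_le hy0 ht.1, by nlinarith [ht.2]⟩
  set K : ℝ := C * y ^ (-(μ+2)) with hKdef
  have hK : 0 ≤ K := by positivity
  have hsA : ∀ t ∈ Set.Icc y (y+h), ‖g'' t‖ ≤ K := by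
    intro t ht
    refine (hbd t (hIsub ht)).trans ?_
    exact mul_le_mul_of_nonneg_left
      (Real.rpow_le_rpow_of_nonpos hy0 ht.1 (by linarith)) hC
  have hsB : ∀ t ∈ Set.Icc y (y+h), ‖g' t - g' y‖ ≤ K * h := by
    intro t ht
    have := (convex_Icc y (y+h)).norm_image_sub_le_of_norm_hasDerivWithin_le
      (fun s hs => (hder' s (hIsub hs)).hasDerivWithinAt) hsA
      (Set.left_mem_Icc.mpr (by linarith)) ht
    refine this.trans ?_
    apply mul_le_mul_of_nonneg_left _ hK
    rw [Real.norm_eq_abs, abs_of_nonneg (by linarith [ht.1])]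
    linarith [ht.2]
  -- second MVT with ψ t = g t - t • g' y
  have hsC : ‖(g (y+h) - (y+h) • g' y) - (g y - y • g' y)‖ ≤ K * h * h := by
    have hD : ∀ t ∈ Set.Icc y (y+h),
        HasDerivWithinAt (fun t : ℝ => g t - t • g' y) (g' t - g' y) (Set.Icc y (y+h)) t := by
      intro t ht
      have h1 : HasDerivAt (fun t : ℝ => t • g' y) ((1:ℝ) • g' y) t :=
        (hasDerivAt_id t).smul_const (g' y)
      rw [one_smul] at h1
      exact ((hder t (hIsub ht)).sub h1).hasDerivWithinAt
    have := (convex_Icc y (y+h)).norm_image_sub_le_of_norm_hasDerivWithin_le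
      hD hsB (Set.left_mem_Icc.mpr (by linarith))
      (Set.right_mem_Icc.mpr (by linarith))
    refine this.trans ?_
    rw [Real.norm_eq_abs, abs_of_nonneg (by linarith : (0:ℝ) ≤ y + h - y)]
    have : y + h - y = h := by ring
    rw [this]
  have hkey : h * ‖g' y‖ ≤ ‖g (y+h)‖ + ‖g y‖ + K * h * h := by
    have herw : h • g' y = (g (y+h) - g y) - ((g (y+h) - (y+h) • g' y) - (g y - y • g' y)) := by
      have : ((y+h) : ℝ) • g' y - y • g' y = h • g' y := by
        rw [← sub_smul]; congr 1; ring
      rw [← this]; ring_nf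
    have h1 : ‖h • g' y‖ ≤ ‖g (y+h) - g y‖ + K * h * h := by
      rw [herw]; exact (norm_sub_le _ _).trans (by linarith [hsC])
    have h2 : ‖g (y+h) - g y‖ ≤ ‖g (y+h)‖ + ‖g y‖ := norm_sub_le _ _
    have h3 : ‖h • g' y‖ = h * ‖g' y‖ := by
      rw [norm_smul, Real.norm_eq_abs, abs_of_pos hh]
    linarith
  -- bounds on g
  have hgy : ‖g y‖ ≤ ε*δ/4 * y ^ (-μ) := by
    have := husub ⟨hy0, by linarith⟩
    simpa [Real.norm_eq_abs, abs_of_pos (Real.rpow_pos_of_pos hy0 (-μ))] using this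
  have hgyh : ‖g (y+h)‖ ≤ ε*δ/4 * y ^ (-μ) := by
    have hmem2 : y + h ∈ Set.Ioc (0:ℝ) u := hIu (Set.right_mem_Icc.mpr (by linarith))
    have := husub hmem2
    simp only [Set.mem_setOf_eq, Real.norm_eq_abs,
      abs_of_pos (Real.rpow_pos_of_pos (by linarith : (0:ℝ) < y + h) (-μ))] at this
    refine this.trans ?_
    exact mul_le_mul_of_nonneg_left
      (Real.rpow_le_rpow_of_nonpos hy0 (by linarith) (by linarith)) (by positivity)
  -- rpow arithmetic
  have e1 : K * h * h = C * δ^2 * y ^ (-μ) := by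
    rw [hKdef, hhdef]
    rw [show C * y ^ (-(μ+2)) * (δ*y) * (δ*y) = C * δ^2 * (y ^ (-(μ+2)) * y * y) by ring]
    congr 1
    rw [show y ^ (-(μ+2)) * y * y = y ^ (-(μ+2)) * (y^(1:ℝ) * y^(1:ℝ)) by rw [Real.rpow_one]; ring,
      ← Real.rpow_add hy0, ← Real.rpow_add hy0]
    norm_num
  have e2 : h * (ε * y ^ (-(μ+1))) = ε * δ * y ^ (-μ) := by
    rw [hhdef, show δ * y * (ε * y ^ (-(μ+1))) = ε * δ * (y^(1:ℝ) * y ^ (-(μ+1))) by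
      rw [Real.rpow_one]; ring, ← Real.rpow_add hy0]
    norm_num
  have htot : h * ‖g' y‖ ≤ h * (ε * y ^ (-(μ+1))) := by
    rw [e2]
    have : ‖g (y+h)‖ + ‖g y‖ + K * h * h ≤ ε * δ * y ^ (-μ) := by
      rw [e1] at hkey ⊢
      have hyμ : (0:ℝ) < y ^ (-μ) := Real.rpow_pos_of_pos hy0 _
      have hprod := mul_le_mul_of_nonneg_right hδC
        (by positivity : (0:ℝ) ≤ δ * y ^ (-μ))
      linarith [hgy, hgyh, hprod]
    linarith [hkey]
  have := le_of_mul_le_mul_left htot hh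
  rwa [Real.norm_eq_abs, abs_of_pos (Real.rpow_pos_of_pos hy0 (-(μ+1)))]

lemma hl_glob (y₀ b r : ℝ) (hb : 0 < b) (hby₀ : b ≤ y₀) (F : ℝ → ℂ)
    (hcont : ContinuousOn F (Set.Ioc 0 y₀))
    (hO : F =O[𝓝[>] (0:ℝ)] fun y : ℝ => y ^ r) :
    ∃ C : ℝ, 0 ≤ C ∧ ∀ y ∈ Set.Ioc (0:ℝ) b, ‖F y‖ ≤ C * y ^ r := by
  obtain ⟨c, hc⟩ := hO.bound
  obtain ⟨u, hu, husub⟩ := mem_nhdsGT_iff_exists_Ioc_subset.mp hc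
  rw [Set.mem_Ioi] at hu
  set u' : ℝ := min u b with hu'def
  have hu' : 0 < u' := lt_min hu hb
  have hu'b : u' ≤ b := min_le_right _ _
  have hcompact : IsCompact (Set.Icc u' b) := isCompact_Icc
  have hsub2 : Set.Icc u' b ⊆ Set.Ioc 0 y₀ :=
    fun t ht => ⟨lt_of_lt_of_le hu' ht.1, ht.2.trans hby₀⟩
  obtain ⟨M, hM⟩ := hcompact.exists_bound_of_continuousOn (hcont.mono hsub2)
  have hrc : ContinuousOn (fun y : ℝ => y ^ r) (Set.Icc u' b) := fun t ht =>
    (Real.continuousAt_rpow_const t r (Or.inl (ne_of_gt (lt_of_lt_of_le hu' ht.1)))).continuousWithinAt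
  obtain ⟨x₀, hx₀mem, hx₀'⟩ := hcompact.exists_isMinOn ⟨u', Set.left_mem_Icc.mpr hu'b⟩ hrc
  have hx₀ : ∀ t ∈ Set.Icc u' b, x₀ ^ r ≤ t ^ r := fun t ht => hx₀' ht
  set m : ℝ := x₀ ^ r with hmdef
  have hm : 0 < m := Real.rpow_pos_of_pos (lt_of_lt_of_le hu' hx₀mem.1) r
  have hM0 : 0 ≤ M := le_trans (norm_nonneg _) (hM u' (Set.left_mem_Icc.mpr hu'b))
  refine ⟨max c (M/m), le_max_of_le_right (by positivity), ?_⟩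
  rintro y ⟨hy0, hyb⟩
  by_cases hcase : y ≤ u
  · have := husub ⟨hy0, hcase⟩
    rw [Set.mem_setOf_eq, Real.norm_eq_abs, abs_of_pos (Real.rpow_pos_of_pos hy0 r)] at this
    refine this.trans ?_
    exact mul_le_mul_of_nonneg_right (le_max_left _ _) (le_of_lt (Real.rpow_pos_of_pos hy0 r))
  · push_neg at hcase
    have hymem : y ∈ Set.Icc u' b := ⟨le_of_lt (lt_of_le_of_lt (min_le_left _ _) hcase), hyb⟩
    have h1 : ‖F y‖ ≤ M := hM y hymem
    have h2 : m ≤ y ^ r := hx₀ y hymem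
    calc ‖F y‖ ≤ M := h1
    _ = M / m * m := by field_simp
    _ ≤ max c (M/m) * y ^ r := by
        apply mul_le_mul (le_max_right _ _) h2 (le_of_lt hm)
        exact le_trans (by positivity) (le_max_right _ _)

/-- Hardy–Littlewood differentiation lemma: if `f` is `p` times continuously
differentiable on `(0, y₀]`, `f(y) = o(y^{-λ})` and `f^{(p)}(y) = O(y^{-p-λ})`
as `y → 0+`, then `f^{(q)}(y) = o(y^{-q-λ})` for every `0 < q < p`. -/
theorem hardy_littlewood_differentiation_lemma
    (y₀ lam : ℝ) (hy₀ : 0 < y₀) (hlam : 0 < lam) (p : ℕ) (hp : 0 < p)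
    (f : ℝ → ℂ)
    (hf : ContDiffOn ℝ p f (Set.Ioc 0 y₀))
    (ho : (fun y : ℝ => f y) =o[𝓝[>] 0] fun y : ℝ => y ^ (-lam))
    (hO : (fun y : ℝ => iteratedDerivWithin p f (Set.Ioc 0 y₀) y)
        =O[𝓝[>] 0] fun y : ℝ => y ^ (-((p : ℝ) + lam))) :
    ∀ q : ℕ, 0 < q → q < p →
      (fun y : ℝ => iteratedDerivWithin q f (Set.Ioc 0 y₀) y)
        =o[𝓝[>] 0] fun y : ℝ => y ^ (-((q : ℝ) + lam)) := by
  set s : Set ℝ := Set.Ioc 0 y₀ with hsdef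
  have hs : UniqueDiffOn ℝ s := uniqueDiffOn_Ioc 0 y₀
  set b : ℝ := y₀ / 2 with hbdef
  have hb : 0 < b := by positivity
  have hbsub : Set.Ioc (0:ℝ) b ⊆ s := fun t ht => ⟨ht.1, le_trans ht.2 (by linarith)⟩
  have hder : ∀ k : ℕ, k < p → ∀ t ∈ Set.Ioc (0:ℝ) b,
      HasDerivAt (iteratedDerivWithin k f s) (iteratedDerivWithin (k+1) f s t) t := by
    intro k hk t ht
    have hts : t ∈ s := hbsub ht
    have hnhds : s ∈ 𝓝 t :=
      mem_nhds_iff.mpr ⟨Set.Ioo 0 y₀, Set.Ioo_subset_Ioc_self, isOpen_Ioo,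
        ⟨ht.1, lt_of_le_of_lt ht.2 (by linarith)⟩⟩
    have hdiff := hf.differentiableOn_iteratedDerivWithin
      (show (k : WithTop ℕ∞) < p by exact_mod_cast hk) hs
    have hD := (hdiff t hts).hasDerivWithinAt.hasDerivAt hnhds
    rwa [← iteratedDerivWithin_succ] at hD
  have hcont : ∀ k : ℕ, k ≤ p → ContinuousOn (iteratedDerivWithin k f s) s := by
    intro k hk
    exact hf.continuousOn_iteratedDerivWithin (by exact_mod_cast hk) hs
  -- Step 1: pointwise O-bounds for all 1 ≤ k ≤ p on (0, b]
  have hglob : ∀ n : ℕ, ∀ k : ℕ, k ≤ p → p - k = n →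
      ∃ C : ℝ, 0 ≤ C ∧ ∀ y ∈ Set.Ioc (0:ℝ) b,
        ‖iteratedDerivWithin k f s y‖ ≤ C * y ^ (-((k:ℝ) + lam)) := by
    intro n
    induction n with
    | zero =>
      intro k hk hk0
      have hkp : k = p := by omega
      subst hkp
      exact hl_glob y₀ b (-((k:ℝ)+lam)) hb (by linarith) _ (hcont k le_rfl) hO
    | succ n ih =>
      intro k hk hkn
      have hk1 : k + 1 ≤ p := by omega
      obtain ⟨C, hC, hCbd⟩ := ih (k+1) hk1 (by omega)
      have hρ : (1:ℝ) < ((k:ℝ)+1) + lam := by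
        have : (0:ℝ) ≤ (k:ℝ) := Nat.cast_nonneg k
        linarith
      have hbd' : ∀ t ∈ Set.Ioc (0:ℝ) b,
          ‖iteratedDerivWithin (k+1) f s t‖ ≤ C * t ^ (-(((k:ℝ)+1) + lam)) := by
        intro t ht
        have := hCbd t ht
        rwa [show -(((k+1:ℕ):ℝ) + lam) = -(((k:ℝ)+1) + lam) by push_cast; ring] at this
      obtain ⟨C', hC', hbd''⟩ := hl_O_step b hb _ _ (((k:ℝ)+1) + lam) C hρ hC
        (hder k (by omega)) ((hcont (k+1) hk1).mono hbsub) hbd'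
      refine ⟨C', hC', fun y hy => ?_⟩
      have := hbd'' y hy
      rwa [show (1:ℝ) - (((k:ℝ)+1) + lam) = -((k:ℝ) + lam) by ring] at this
  -- Step 2: upgrade to little-o by upward induction
  have hlittle : ∀ q : ℕ, q + 1 ≤ p →
      (fun y : ℝ => iteratedDerivWithin q f s y)
        =o[𝓝[>] (0:ℝ)] fun y : ℝ => y ^ (-((q:ℝ) + lam)) := by
    intro q
    induction q with
    | zero =>
      intro _
      simp only [iteratedDerivWithin_zero, Nat.cast_zero, zero_add]
      exact ho
    | succ q ih =>
      intro hq2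
      have hq1 : q + 1 ≤ p := by omega
      obtain ⟨C, hC, hCbd⟩ := hglob (p - (q+2)) (q+2) (by omega) rfl
      have hbd' : ∀ t ∈ Set.Ioc (0:ℝ) b,
          ‖iteratedDerivWithin (q+2) f s t‖ ≤ C * t ^ (-(((q:ℝ) + lam) + 2)) := by
        intro t ht
        have := hCbd t ht
        rwa [show -(((q+2:ℕ):ℝ) + lam) = -(((q:ℝ) + lam) + 2) by push_cast; ring] at this
      have hres := hl_o_step b hb _ _ _ ((q:ℝ) + lam) C (by positivity) hC
        (hder q (by omega)) (hder (q+1) (by omega)) hbd' (ih hq1)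
      have : (fun y : ℝ => y ^ (-(((q:ℝ) + lam) + 1))) =
          fun y : ℝ => y ^ (-(((q+1:ℕ):ℝ) + lam)) := by
        funext y
        rw [show -(((q:ℝ) + lam) + 1) = -(((q+1:ℕ):ℝ) + lam) by push_cast; ring]
      rwa [this] at hres
  intro q hq0 hqp
  exact hlittle q (by omega)
end

section
/- Let b > 1 and ρ > 0 be real numbers, and define f(y) = ∑_{n=0}^∞ b^{nρ} e^{−bⁿ y} for y > 0. Then f(y) = O(y^{−ρ}) as y → 0+; i.e. there exist constants K > 0 and δ > 0 such that f(y) ≤ K y^{−ρ} for all 0 < y < δ. -/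
open Real Filter Topology

/-- For `b > 1` and `ρ > 0`, the function `f(y) = ∑ b^{nρ} e^{-bⁿ y}` satisfies
`f(y) = O(y^{-ρ})` as `y → 0+`. -/
theorem sum_exp_bigO
    (b ρ : ℝ) (hb : 1 < b) (hρ : 0 < ρ) :
    ∃ K > (0:ℝ), ∃ δ > (0:ℝ), ∀ y : ℝ, 0 < y → y < δ →
      (∑' n : ℕ, b ^ ((n : ℝ) * ρ) * Real.exp (-(b ^ n) * y)) ≤ K * y ^ (-ρ) := by
  classical
  have hb0 : (0:ℝ) < b := lt_trans one_pos hb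
  set r : ℝ := b ^ (-ρ) with hr_def
  have hr0 : 0 < r := Real.rpow_pos_of_pos hb0 _
  have hr1 : r < 1 := Real.rpow_lt_one_of_one_lt_of_neg hb (by linarith)
  set k : ℕ := ⌈2 * ρ⌉₊ with hk_def
  have hk : 2 * ρ ≤ (k : ℝ) := Nat.le_ceil _
  set C : ℝ := (Nat.factorial k : ℝ) with hC_def
  have hC1 : (1:ℝ) ≤ C := by
    rw [hC_def]; exact_mod_cast Nat.one_le_iff_ne_zero.mpr (Nat.factorial_ne_zero k)
  have hC0 : (0:ℝ) < C := lt_of_lt_of_le one_pos hC1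
  have hinv : (0:ℝ) < (1 - r)⁻¹ := inv_pos.mpr (by linarith)
  refine ⟨(1 + C) * (1 - r)⁻¹, by positivity, 1, one_pos, fun y hy hy1 => ?_⟩
  have hbn : ∀ n : ℕ, (0:ℝ) < b ^ n := fun n => pow_pos hb0 n
  have hyρ : (0:ℝ) < y ^ (-ρ) := Real.rpow_pos_of_pos hy _
  set T : ℕ → ℝ := fun n => b ^ ((n : ℝ) * ρ) * Real.exp (-(b ^ n) * y) with hT_def
  have hTnonneg : ∀ n, 0 ≤ T n := fun n =>
    mul_nonneg (Real.rpow_nonneg hb0.le _) (Real.exp_nonneg _)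
  have hdecomp : ∀ n : ℕ, b ^ ((n : ℝ) * ρ) = (b ^ n * y) ^ ρ * y ^ (-ρ) := by
    intro n
    rw [Real.rpow_mul hb0.le, Real.rpow_natCast, Real.mul_rpow (hbn n).le hy.le,
      Real.rpow_neg hy.le, mul_assoc, mul_inv_cancel₀ (Real.rpow_pos_of_pos hy ρ).ne',
      mul_one]
  have hpowr : ∀ d : ℕ, ((b ^ d : ℝ)) ^ (-ρ) = r ^ d := by
    intro d
    rw [← Real.rpow_natCast b d, ← Real.rpow_mul hb0.le, mul_comm, Real.rpow_mul hb0.le,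
      Real.rpow_natCast]
  -- choose N minimal with 1 ≤ b^N * y
  have hex : ∃ n : ℕ, 1 ≤ b ^ n * y := by
    obtain ⟨n, hn⟩ := pow_unbounded_of_one_lt (y⁻¹) hb
    exact ⟨n, le_of_lt (by rw [← inv_mul_cancel₀ hy.ne']; exact mul_lt_mul_of_pos_right hn hy)⟩
  set N : ℕ := Nat.find hex with hN_def
  have hN1 : 1 ≤ b ^ N * y := Nat.find_spec hex
  have hNmin : ∀ n < N, b ^ n * y < 1 := fun n hn => lt_of_not_ge (Nat.find_min hex hn)
  have hNb : b ^ N * y < b := by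
    rcases Nat.eq_zero_or_pos N with h0 | hpos
    · rw [h0, pow_zero, one_mul]; linarith
    · have := hNmin (N - 1) (Nat.sub_lt hpos one_pos)
      have hNe : b ^ N = b * b ^ (N - 1) := by
        rw [← pow_succ']; congr 1; omega
      rw [hNe, mul_assoc]
      nlinarith [hbn (N-1)]
  -- Bound for n < N
  have hboundA : ∀ n < N, T n ≤ r ^ (N - 1 - n) * y ^ (-ρ) := by
    intro n hn
    have hd : (n + 1) + (N - 1 - n) = N := by omega
    have hxd : b ^ n * y < ((b : ℝ) ^ (N - 1 - n))⁻¹ := by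
      have hc := hbn (N - 1 - n)
      have h1 : b ^ (N - 1 - n) * (b ^ n * y) * b = b ^ N * y := by
        rw [show (b:ℝ) ^ N = b ^ (N - 1 - n) * b ^ n * b from by
          rw [← pow_add, ← pow_succ]; congr 1; omega]
        ring
      have hcx : b ^ (N - 1 - n) * (b ^ n * y) < 1 := by nlinarith [hNb, hb0]
      calc b ^ n * y = (b ^ (N - 1 - n))⁻¹ * (b ^ (N - 1 - n) * (b ^ n * y)) := by
            field_simp
        _ < (b ^ (N - 1 - n))⁻¹ * 1 := mul_lt_mul_of_pos_left hcx (inv_pos.mpr hc)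
        _ = ((b : ℝ) ^ (N - 1 - n))⁻¹ := mul_one _
    have hexp : Real.exp (-(b ^ n) * y) ≤ 1 := by
      apply Real.exp_le_one_iff.mpr; nlinarith [hbn n]
    calc T n ≤ b ^ ((n : ℝ) * ρ) * 1 :=
          mul_le_mul_of_nonneg_left hexp (Real.rpow_nonneg hb0.le _)
      _ = (b ^ n * y) ^ ρ * y ^ (-ρ) := by rw [mul_one, hdecomp]
      _ ≤ (((b : ℝ) ^ (N - 1 - n))⁻¹) ^ ρ * y ^ (-ρ) :=
          mul_le_mul_of_nonneg_right
            (Real.rpow_le_rpow (mul_pos (hbn n) hy).le hxd.le hρ.le) hyρ.le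
      _ = r ^ (N - 1 - n) * y ^ (-ρ) := by
          rw [Real.inv_rpow (hbn _).le, ← Real.rpow_neg (hbn _).le, hpowr]
  -- Bound for indices ≥ N
  have hboundB : ∀ i : ℕ, T (i + N) ≤ C * r ^ i * y ^ (-ρ) := by
    intro i
    set x : ℝ := b ^ (i + N) * y with hx_def
    have hxb : (b : ℝ) ^ i ≤ x := by
      have : x = b ^ i * (b ^ N * y) := by rw [hx_def, pow_add]; ring
      rw [this]
      nlinarith [hbn i, hN1]
    have hbi1 : (1:ℝ) ≤ b ^ i := one_le_pow₀ hb.le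
    have hx1 : (1:ℝ) ≤ x := le_trans hbi1 hxb
    have hx0 : (0:ℝ) < x := lt_of_lt_of_le one_pos hx1
    have hek : Real.exp (-(b ^ (i + N)) * y) ≤ C / x ^ k := by
      have h1 : x ^ k / C ≤ Real.exp x := by
        rw [hC_def]; exact Real.pow_div_factorial_le_exp x hx0.le k
      have h2 : Real.exp (-(b ^ (i + N)) * y) = (Real.exp x)⁻¹ := by
        rw [hx_def, ← Real.exp_neg]; ring_nf
      rw [h2, div_eq_mul_inv, ← inv_inv (C) ]
      rw [← mul_inv]
      apply inv_anti₀
      · positivity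
      · calc C⁻¹ * x ^ k = x ^ k / C := by ring
          _ ≤ Real.exp x := h1
    have hxρ : (x) ^ ρ * (C / x ^ k) ≤ C * r ^ i := by
      have hxk : x ^ ρ / x ^ k = x ^ (ρ - (k:ℝ)) := by
        rw [← Real.rpow_natCast x k, ← Real.rpow_sub hx0]
      have h3 : x ^ (ρ - (k:ℝ)) ≤ x ^ (-ρ) :=
        Real.rpow_le_rpow_of_exponent_le hx1 (by linarith)
      have h4 : x ^ (-ρ) ≤ ((b:ℝ) ^ i) ^ (-ρ) :=
        Real.rpow_le_rpow_of_nonpos (by positivity) hxb (by linarith)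
      calc x ^ ρ * (C / x ^ k) = C * (x ^ ρ / x ^ k) := by ring
        _ = C * x ^ (ρ - (k:ℝ)) := by rw [hxk]
        _ ≤ C * x ^ (-ρ) := by gcongr
        _ ≤ C * ((b:ℝ) ^ i) ^ (-ρ) := by gcongr
        _ = C * r ^ i := by rw [hpowr]
    calc T (i + N) = (x ^ ρ * y ^ (-ρ)) * Real.exp (-(b ^ (i + N)) * y) := by
          rw [hT_def]; simp only; rw [hdecomp (i + N)]
      _ ≤ (x ^ ρ * y ^ (-ρ)) * (C / x ^ k) := by
          apply mul_le_mul_of_nonneg_left hek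
          positivity
      _ = (x ^ ρ * (C / x ^ k)) * y ^ (-ρ) := by ring
      _ ≤ (C * r ^ i) * y ^ (-ρ) := by gcongr
      _ = C * r ^ i * y ^ (-ρ) := by ring
  -- summability
  have hgeom : Summable (fun i : ℕ => r ^ i) := summable_geometric_of_lt_one hr0.le hr1
  have hsum2 : Summable (fun i => T (i + N)) := by
    apply Summable.of_nonneg_of_le (fun i => hTnonneg _) (fun i => hboundB i)
    simpa [mul_comm, mul_assoc] using (hgeom.mul_left C).mul_right (y ^ (-ρ))
  have hT : Summable T := (summable_nat_add_iff N).mp hsum2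
  -- split the sum
  rw [← Summable.sum_add_tsum_nat_add N hT]
  have h1 : ∑ i ∈ Finset.range N, T i ≤ (1 - r)⁻¹ * y ^ (-ρ) := by
    calc ∑ i ∈ Finset.range N, T i ≤ ∑ i ∈ Finset.range N, r ^ (N - 1 - i) * y ^ (-ρ) :=
          Finset.sum_le_sum fun i hi => hboundA i (Finset.mem_range.mp hi)
      _ = (∑ i ∈ Finset.range N, r ^ (N - 1 - i)) * y ^ (-ρ) := by rw [Finset.sum_mul]
      _ = (∑ i ∈ Finset.range N, r ^ i) * y ^ (-ρ) := by
          rw [Finset.sum_range_reflect (fun i => r ^ i) N]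
      _ ≤ (1 - r)⁻¹ * y ^ (-ρ) := by
          gcongr
          calc ∑ i ∈ Finset.range N, r ^ i ≤ ∑' i : ℕ, r ^ i :=
                Summable.sum_le_tsum _ (fun i _ => by positivity) hgeom
            _ = (1 - r)⁻¹ := tsum_geometric_of_lt_one hr0.le hr1
  have h2 : ∑' i : ℕ, T (i + N) ≤ C * (1 - r)⁻¹ * y ^ (-ρ) := by
    calc ∑' i : ℕ, T (i + N) ≤ ∑' i : ℕ, C * r ^ i * y ^ (-ρ) := by
          apply Summable.tsum_le_tsum hboundB hsum2
          simpa [mul_comm, mul_assoc] using (hgeom.mul_left C).mul_right (y ^ (-ρ))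
      _ = ∑' i : ℕ, (C * y ^ (-ρ)) * r ^ i := tsum_congr fun i => by ring
      _ = (C * y ^ (-ρ)) * ∑' i : ℕ, r ^ i := tsum_mul_left
      _ = C * (1 - r)⁻¹ * y ^ (-ρ) := by rw [tsum_geometric_of_lt_one hr0.le hr1]; ring
  calc ∑ i ∈ Finset.range N, T i + ∑' i : ℕ, T (i + N)
      ≤ (1 - r)⁻¹ * y ^ (-ρ) + C * (1 - r)⁻¹ * y ^ (-ρ) := add_le_add h1 h2
    _ = (1 + C) * (1 - r)⁻¹ * y ^ (-ρ) := by ring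
end

section
/- Let b ≥ 2 be an integer and let x be a real number. If sin(bⁿπx) → 0 as n → ∞, then there exist integers p and q with q ≥ 0 such that x = p / b^q. Consequently sin(bⁿπx) = 0 for all n ≥ q. -/
open Real Filter Topology

/-- distance of `t` to the nearest integer -/
noncomputable def nearDist (t : ℝ) : ℝ := |t - round t|

lemma nearDist_nonneg (t : ℝ) : 0 ≤ nearDist t := abs_nonneg _

lemma nearDist_le_half (t : ℝ) : nearDist t ≤ 1 / 2 := abs_sub_round t

/-- Jordan inequality: `2 * nearDist t ≤ |sin (π t)|`. -/
lemma two_nearDist_le_abs_sin (t : ℝ) : 2 * nearDist t ≤ |Real.sin (π * t)| := by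
  set m : ℤ := round t
  set u : ℝ := t - m
  have hu : |u| ≤ 1 / 2 := abs_sub_round t
  have h1 : Real.sin (π * t) = (-1) ^ m * Real.sin (π * u) := by
    have : π * t = π * u + m * π := by ring
    rw [this, Real.sin_add_int_mul_pi]
  have h2 : |Real.sin (π * t)| = |Real.sin (π * u)| := by
    rw [h1, abs_mul]
    have : |((-1 : ℝ)) ^ m| = 1 := by
      rcases Int.even_or_odd m with he | ho
      · rw [he.neg_one_zpow]; simp
      · rw [ho.neg_one_zpow]; simp
    rw [this, one_mul]
  rw [h2]
  have h3 : |Real.sin (π * u)| = Real.sin (π * |u|) := by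
    rcases abs_cases u with ⟨h, _⟩ | ⟨h, _⟩
    · rw [h, abs_of_nonneg]
      exact Real.sin_nonneg_of_nonneg_of_le_pi (by positivity)
        (by nlinarith [Real.pi_pos, abs_nonneg u])
    · have hnn : 0 ≤ Real.sin (π * -u) :=
        Real.sin_nonneg_of_nonneg_of_le_pi (by nlinarith [Real.pi_pos])
          (by nlinarith [Real.pi_pos])
      rw [mul_neg, Real.sin_neg] at hnn
      rw [h, mul_neg, Real.sin_neg, abs_of_nonpos (by linarith)]
  rw [h3]
  have h4 : 2 / π * (π * |u|) ≤ Real.sin (π * |u|) := by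
    apply Real.mul_le_sin (by positivity)
    nlinarith [Real.pi_pos]
  have h5 : 2 / π * (π * |u|) = 2 * |u| := by
    field_simp
  have h6 : nearDist t = |u| := rfl
  rw [h6]
  linarith

/-- Doubling: if `nearDist t ≤ 1/(2b)` then `nearDist (b*t) = b * nearDist t`. -/
lemma nearDist_mul (b : ℕ) (hb : 2 ≤ b) (t : ℝ) (ht : nearDist t < 1 / (2 * b)) :
    nearDist ((b : ℝ) * t) = b * nearDist t := by
  have hb0 : (0:ℝ) < b := by positivity
  have key : |(b : ℝ) * t - ((b * round t : ℤ) : ℝ)| = b * nearDist t := by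
    push_cast
    rw [show (b:ℝ) * t - b * round t = b * (t - round t) by ring, abs_mul,
      abs_of_nonneg hb0.le]
    rfl
  have hlt : (b : ℝ) * nearDist t < 1 / 2 := by
    rw [lt_div_iff₀ (show (0:ℝ) < 2 * b by positivity)] at ht
    nlinarith [ht]
  have hle : nearDist ((b:ℝ) * t) ≤ b * nearDist t := key ▸ round_le _ _
  -- show round (b*t) = b * round t
  have hround : round ((b:ℝ) * t) = b * round t := by
    by_contra hne
    have h1 : (1 : ℝ) ≤ |((round ((b:ℝ)*t) : ℝ)) - ((b * round t : ℤ) : ℝ)| := by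
      rw [show ((round ((b:ℝ)*t) : ℝ)) - ((b * round t : ℤ) : ℝ)
        = (((round ((b:ℝ)*t) - b * round t : ℤ)) : ℝ) by push_cast; ring]
      rw [← Int.cast_abs]
      exact_mod_cast Int.one_le_abs (sub_ne_zero.mpr hne)
    have h2 : |((round ((b:ℝ)*t) : ℝ)) - ((b * round t : ℤ) : ℝ)| ≤
        nearDist ((b:ℝ)*t) + b * nearDist t := by
      calc |((round ((b:ℝ)*t) : ℝ)) - ((b * round t : ℤ) : ℝ)|
          ≤ |((round ((b:ℝ)*t) : ℝ)) - (b:ℝ)*t| + |(b:ℝ)*t - ((b * round t : ℤ) : ℝ)| :=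
            abs_sub_le _ _ _
        _ = nearDist ((b:ℝ)*t) + b * nearDist t := by
            rw [abs_sub_comm, key]; rfl
    have := hle
    linarith
  unfold nearDist
  rw [hround]
  push_cast
  rw [show (b:ℝ) * t - b * round t = b * (t - round t) by ring, abs_mul,
    abs_of_nonneg hb0.le]

/-- If `b ≥ 2` is an integer and `sin(bⁿ π x) → 0` as `n → ∞`, then
`x = p / b^q` for some integers `p`, `q ≥ 0`, and consequently
`sin(bⁿ π x) = 0` for all `n ≥ q`. -/
theorem sin_pow_tendsto_zero_rat
    (b : ℕ) (hb : 2 ≤ b) (x : ℝ)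
    (h : Tendsto (fun n : ℕ => Real.sin ((b : ℝ) ^ n * π * x)) atTop (𝓝 0)) :
    ∃ (p : ℤ) (q : ℕ), x = (p : ℝ) / (b : ℝ) ^ q ∧
      ∀ n : ℕ, q ≤ n → Real.sin ((b : ℝ) ^ n * π * x) = 0 := by
  have hb0 : (0:ℝ) < b := by positivity
  have hb1 : (1:ℝ) < b := by exact_mod_cast hb.trans_lt' one_lt_two
  -- nearDist (b^n x) → 0
  have hd : Tendsto (fun n : ℕ => nearDist ((b:ℝ) ^ n * x)) atTop (𝓝 0) := by
    have habs : Tendsto (fun n : ℕ => |Real.sin ((b : ℝ) ^ n * π * x)|) atTop (𝓝 0) := by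
      simpa using h.abs
    apply squeeze_zero (fun n => nearDist_nonneg _) (fun n => ?_)
      (by simpa using habs.const_mul (1/2 : ℝ))
    have := two_nearDist_le_abs_sin ((b:ℝ) ^ n * x)
    rw [show π * ((b:ℝ)^n * x) = (b:ℝ)^n * π * x by ring] at this
    linarith
  -- there is q with nearDist (b^q x) = 0
  have hexq : ∃ q : ℕ, nearDist ((b:ℝ) ^ q * x) = 0 := by
    by_contra hc
    push_neg at hc
    have hpos : ∀ n, 0 < nearDist ((b:ℝ)^n * x) :=
      fun n => lt_of_le_of_ne (nearDist_nonneg _) (Ne.symm (hc n))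
    obtain ⟨N, hN⟩ := (Metric.tendsto_atTop.mp hd (1/(2*b)) (by positivity))
    have hsmall : ∀ n, N ≤ n → nearDist ((b:ℝ)^n * x) < 1/(2*b) := by
      intro n hn
      have := hN n hn
      rw [Real.dist_eq, sub_zero, abs_of_nonneg (nearDist_nonneg _)] at this
      exact this
    have hgrow : ∀ k : ℕ, nearDist ((b:ℝ)^(N+k) * x) = (b:ℝ)^k * nearDist ((b:ℝ)^N * x) := by
      intro k
      induction k with
      | zero => simp
      | succ k ih =>
        have hk : nearDist ((b:ℝ)^(N+k) * x) < 1/(2*b) := hsmall _ (by omega)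
        have := nearDist_mul b hb ((b:ℝ)^(N+k) * x) hk
        rw [show (b:ℝ) * ((b:ℝ)^(N+k) * x) = (b:ℝ)^(N+(k+1)) * x by ring] at this
        rw [this, ih]
        ring
    obtain ⟨k, hk⟩ := pow_unbounded_of_one_lt
      ((1/(2*b)) / nearDist ((b:ℝ)^N * x)) hb1
    have h1 : nearDist ((b:ℝ)^(N+k) * x) < 1/(2*b) := hsmall _ (by omega)
    rw [hgrow k] at h1
    have h2 : (1/(2*(b:ℝ))) < (b:ℝ)^k * nearDist ((b:ℝ)^N * x) := by
      rw [div_lt_iff₀ (hpos N)] at hk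
      linarith
    linarith
  obtain ⟨q, hq⟩ := hexq
  have hbq : ((b:ℝ)) ^ q ≠ 0 := by positivity
  have hqx : (b:ℝ) ^ q * x = (round ((b:ℝ)^q * x) : ℝ) := by
    have := abs_eq_zero.mp hq
    linarith [sub_eq_zero.mp this]
  refine ⟨round ((b:ℝ)^q * x), q, ?_, ?_⟩
  · rw [← hqx, mul_div_cancel_left₀ _ hbq]
  · intro n hn
    have : (b:ℝ)^n * π * x = ((b ^ (n - q) * round ((b:ℝ)^q * x) : ℤ) : ℝ) * π := by
      push_cast
      rw [← hqx]
      rw [show (b:ℝ) ^ (n-q) * ((b:ℝ)^q * x) * π = (b:ℝ)^(n-q) * (b:ℝ)^q * x * π by ring,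
        ← pow_add, Nat.sub_add_cancel hn]
      ring
    rw [this, Real.sin_int_mul_pi]
end

section
/- Let b ≥ 3 be an odd integer and let x be a real number. If cos(bⁿπx) → 0 as n → ∞, then there exist integers p and q with q ≥ 0 such that x = (p + 1/2) / b^q. Consequently cos(bⁿπx) = 0 for all n ≥ q. -/
open Real Filter Topology

/-- Signed distance from `y` to the nearest half-integer. -/
noncomputable def frHalf (y : ℝ) : ℝ := y - 1/2 - round (y - 1/2)

lemma frHalf_abs_le (y : ℝ) : |frHalf y| ≤ 1/2 := abs_sub_round (y - 1/2)

lemma frHalf_decomp (y : ℝ) : y = (round (y - 1/2) : ℝ) + 1/2 + frHalf y := by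
  unfold frHalf; ring

lemma abs_neg_one_zpow' (m : ℤ) : |((-1:ℝ))^m| = 1 := by
  rcases Int.even_or_odd m with h | h
  · rw [h.neg_one_zpow]; norm_num
  · rw [h.neg_one_zpow]; norm_num

lemma abs_cos_pi_mul (y : ℝ) : |Real.cos (π * y)| = |Real.sin (π * frHalf y)| := by
  have harg : π * y = (π * frHalf y + π/2) + (round (y - 1/2) : ℤ) * π := by
    unfold frHalf; ring
  rw [harg, Real.cos_add_int_mul_pi, Real.cos_add_pi_div_two, abs_mul,
    abs_neg_one_zpow', one_mul, abs_neg]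

lemma two_abs_frHalf_le (y : ℝ) : 2 * |frHalf y| ≤ |Real.cos (π * y)| := by
  rw [abs_cos_pi_mul]
  have h1 : |frHalf y| ≤ 1/2 := frHalf_abs_le y
  have hπ : (0:ℝ) < π := Real.pi_pos
  have key : 2 / π * (π * |frHalf y|) ≤ Real.sin (π * |frHalf y|) := by
    apply Real.mul_le_sin
    · positivity
    · nlinarith
  have habs : Real.sin (π * |frHalf y|) ≤ |Real.sin (π * frHalf y)| := by
    rcases abs_cases (frHalf y) with ⟨he, _⟩ | ⟨he, _⟩
    · rw [he]; exact le_abs_self _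
    · rw [he, mul_neg, Real.sin_neg]
      exact neg_le_abs _
  have heq : 2 / π * (π * |frHalf y|) = 2 * |frHalf y| := by field_simp
  linarith [heq ▸ key]

lemma frHalf_mul (b : ℤ) (hb : 3 ≤ b) (hodd : Odd b) (y : ℝ)
    (hy : |frHalf y| < 1 / (2 * b)) : frHalf ((b : ℝ) * y) = b * frHalf y := by
  obtain ⟨c, hc⟩ := hodd
  have hbpos : (0:ℝ) < b := by
    have : (0:ℤ) < b := by omega
    exact_mod_cast this
  have hsmall : |(b:ℝ) * frHalf y| < 1/2 := by
    rw [abs_mul, abs_of_pos hbpos]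
    calc (b:ℝ) * |frHalf y| < (b:ℝ) * (1 / (2 * b)) :=
          mul_lt_mul_of_pos_left hy hbpos
      _ = 1/2 := by field_simp
  have harg : (b:ℝ) * y - 1/2 = ((b * round (y - 1/2) + c : ℤ) : ℝ) + (b:ℝ) * frHalf y := by
    unfold frHalf; push_cast [hc]; ring
  have h0 : round ((b:ℝ) * frHalf y) = 0 := by
    rw [round_eq_zero_iff]
    constructor
    · linarith [neg_abs_le ((b:ℝ) * frHalf y)]
    · linarith [le_abs_self ((b:ℝ) * frHalf y)]
  have hround : round ((b:ℝ) * y - 1/2) = b * round (y - 1/2) + c := by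
    rw [harg, round_intCast_add, h0, add_zero]
  have hdef : frHalf ((b:ℝ) * y)
      = ((b:ℝ) * y - 1/2) - ((round ((b:ℝ) * y - 1/2) : ℤ) : ℝ) := rfl
  rw [hdef, hround, harg]
  push_cast
  ring

/-- If `b ≥ 3` is an odd integer and `cos(bⁿ π x) → 0` as `n → ∞`, then
`x = (p + 1/2) / b^q` for some integers `p`, `q ≥ 0`, and consequently
`cos(bⁿ π x) = 0` for all `n ≥ q`. -/
theorem cos_pow_tendsto_zero_rat
    (b : ℤ) (hb : 3 ≤ b) (hodd : Odd b) (x : ℝ)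
    (h : Tendsto (fun n : ℕ => Real.cos ((b : ℝ) ^ n * π * x)) atTop (𝓝 0)) :
    ∃ (p : ℤ) (q : ℕ), x = ((p : ℝ) + 1 / 2) / (b : ℝ) ^ q ∧
      ∀ n : ℕ, q ≤ n → Real.cos ((b : ℝ) ^ n * π * x) = 0 := by
  have hbR : (3:ℝ) ≤ (b:ℝ) := by exact_mod_cast hb
  have hbpos : (0:ℝ) < b := by linarith
  have hev : ∀ᶠ n : ℕ in atTop, |Real.cos ((b : ℝ) ^ n * π * x)| < 1 / b := by
    have := Metric.tendsto_atTop.1 h (1 / b) (by positivity)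
    obtain ⟨N, hN⟩ := this
    filter_upwards [eventually_ge_atTop N] with n hn
    have := hN n hn
    simpa [Real.dist_eq] using this
  obtain ⟨N, hN⟩ := hev.exists_forall_of_atTop
  set F : ℕ → ℝ := fun n => frHalf ((b:ℝ)^n * x) with hF
  have hFsmall : ∀ n, N ≤ n → |F n| < 1 / (2 * b) := by
    intro n hn
    have h1 := two_abs_frHalf_le ((b:ℝ)^n * x)
    have h2 := hN n hn
    have heq : π * ((b:ℝ)^n * x) = (b:ℝ)^n * π * x := by ring
    rw [heq] at h1
    have h3 : 2 * |F n| < 1 / b := lt_of_le_of_lt h1 h2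
    calc |F n| < 1 / b / 2 := by linarith
      _ = 1 / (2 * b) := by ring
  have hiter : ∀ k : ℕ, F (N + k) = (b:ℝ)^k * F N := by
    intro k
    induction k with
    | zero => simp
    | succ k ih =>
      have hstep : frHalf ((b:ℝ) * ((b:ℝ)^(N+k) * x)) = (b:ℝ) * frHalf ((b:ℝ)^(N+k) * x) :=
        frHalf_mul b hb hodd ((b:ℝ)^(N+k) * x) (hFsmall (N + k) (by omega))
      have harg : (b:ℝ)^(N+(k+1)) * x = (b:ℝ) * ((b:ℝ)^(N+k) * x) := by
        rw [show N+(k+1) = (N+k)+1 from rfl, pow_succ]; ring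
      show frHalf ((b:ℝ)^(N+(k+1)) * x) = (b:ℝ)^(k+1) * F N
      rw [harg, hstep]
      show (b:ℝ) * F (N + k) = (b:ℝ)^(k+1) * F N
      rw [ih]; ring
  have hFN : F N = 0 := by
    by_contra hne
    have habs : 0 < |F N| := abs_pos.2 hne
    obtain ⟨k, hk⟩ := pow_unbounded_of_one_lt ((1/2) / |F N|) (show (1:ℝ) < b by linarith)
    have hgt : (1:ℝ)/2 < (b:ℝ)^k * |F N| := by
      rw [div_lt_iff₀ habs] at hk; linarith
    have hle : |F (N + k)| ≤ 1/2 := frHalf_abs_le _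
    rw [hiter k, abs_mul, abs_pow, abs_of_pos hbpos] at hle
    linarith
  set p : ℤ := round ((b:ℝ)^N * x - 1/2) with hp
  have hx : x = ((p:ℝ) + 1/2) / (b:ℝ)^N := by
    have hd := frHalf_decomp ((b:ℝ)^N * x)
    rw [show frHalf ((b:ℝ)^N * x) = F N from rfl, hFN, add_zero] at hd
    have hbn : ((b:ℝ)^N) ≠ 0 := by positivity
    field_simp
    linarith [hd]
  refine ⟨p, N, hx, ?_⟩
  intro n hn
  obtain ⟨j, rfl⟩ : ∃ j, n = N + j := ⟨n - N, by omega⟩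
  have hoddpow : Odd (b ^ j * (2 * p + 1)) := (hodd.pow).mul ⟨p, by ring⟩
  obtain ⟨k, hk⟩ := hoddpow
  rw [Real.cos_eq_zero_iff]
  refine ⟨k, ?_⟩
  have hbn : ((b:ℝ)^N) ≠ 0 := by positivity
  have hkR : (2 * (k:ℝ) + 1) = (b:ℝ)^j * (2 * (p:ℝ) + 1) := by
    have hcast : ((b ^ j * (2 * p + 1) : ℤ) : ℝ) = ((2 * k + 1 : ℤ) : ℝ) := by
      exact_mod_cast congrArg (fun z : ℤ => (z : ℝ)) hk
    push_cast at hcast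
    linarith
  have h1 : (b:ℝ)^(N+j) * π * (((p:ℝ)+1/2)/(b:ℝ)^N) = (b:ℝ)^j * (2*(p:ℝ)+1) * π / 2 := by
    rw [pow_add]; field_simp
  rw [hx, h1, ← hkR]
end

section
/- (Bernstein) Let f : ℝ → ℂ be a 2π-periodic function satisfying a Lipschitz (Hölder) condition of order α > 1/2: there is a constant K such that |f(x + h) − f(x)| ≤ K |h|^α for all x, h ∈ ℝ. Then the Fourier series of f converges absolutely, i.e. ∑_{n∈ℤ} |c_n| < ∞, where c_n = (1/2π) ∫_0^{2π} f(θ) e^{−inθ} dθ are the Fourier coefficients of f. -/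
open Real Filter Topology

section BernsteinAux

open MeasureTheory AddCircle
open scoped ENNReal

private lemma bern_norm_exp_sub_one_sq (θ : ℝ) :
    ‖Complex.exp ((θ:ℂ) * Complex.I) - 1‖ ^ 2 = 2 - 2 * Real.cos θ := by
  rw [Complex.exp_mul_I]
  rw [show ‖Complex.cos θ + Complex.sin θ * Complex.I - 1‖ ^ 2
      = Complex.normSq (Complex.cos θ + Complex.sin θ * Complex.I - 1) from
    (Complex.sq_norm _).symm ▸ rfl]
  rw [Complex.normSq_apply]
  simp only [Complex.sub_re, Complex.add_re, Complex.cos_ofReal_re, Complex.mul_re,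
    Complex.sin_ofReal_re, Complex.I_re, Complex.sin_ofReal_im, Complex.I_im, Complex.one_re,
    Complex.sub_im, Complex.add_im, Complex.cos_ofReal_im, Complex.mul_im, Complex.one_im]
  nlinarith [Real.sin_sq_add_cos_sq θ]

private lemma bern_parseval {T : ℝ} [hT : Fact (0 < T)] (g : C(AddCircle T, ℂ)) (C : ℝ)
    (hC : ∀ t, ‖g t‖ ≤ C) :
    Summable (fun n : ℤ => ‖fourierCoeff (⇑g) n‖ ^ 2) ∧
      ∑' n : ℤ, ‖fourierCoeff (⇑g) n‖ ^ 2 ≤ C ^ 2 := by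
  set gL := ContinuousMap.toLp (E := ℂ) 2 haarAddCircle ℂ g with hgL
  have hcoeff : ∀ n : ℤ, fourierCoeff (⇑g) n = fourierCoeff (⇑gL) n := fun n =>
    (fourierCoeff_toLp g n).symm
  have hsum : Summable fun n : ℤ => ‖fourierCoeff (⇑gL) n‖ ^ 2 := by
    have h1 := (lp.memℓp (fourierBasis.repr gL)).summable
      (by norm_num : 0 < (2 : ℝ≥0∞).toReal)
    refine (summable_congr fun n => ?_).mp h1
    rw [fourierBasis_repr]
    norm_num [Real.rpow_natCast]
  constructor
  · simpa [hcoeff] using hsum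
  · have hpars := tsum_sq_fourierCoeff gL
    have hae : ∫ t : AddCircle T, ‖gL t‖ ^ 2 ∂haarAddCircle
        = ∫ t : AddCircle T, ‖g t‖ ^ 2 ∂haarAddCircle := by
      refine integral_congr_ae ?_
      filter_upwards [ContinuousMap.coeFn_toLp (p := 2) haarAddCircle (𝕜 := ℂ) g] with t ht
      rw [hgL, ht]
    have hint : Integrable (fun t : AddCircle T => ‖g t‖ ^ 2) haarAddCircle :=
      ((g.continuous.norm.pow 2)).integrable_of_hasCompactSupport
        (HasCompactSupport.of_compactSpace _)
    have hmono : ∫ t : AddCircle T, ‖g t‖ ^ 2 ∂haarAddCircle ≤ C ^ 2 := by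
      calc ∫ t : AddCircle T, ‖g t‖ ^ 2 ∂haarAddCircle
          ≤ ∫ _ : AddCircle T, C ^ 2 ∂haarAddCircle := by
            refine integral_mono hint (integrable_const _) fun t => ?_
            exact pow_le_pow_left₀ (norm_nonneg _) (hC t) 2
        _ = C ^ 2 := by simp
    calc ∑' n : ℤ, ‖fourierCoeff (⇑g) n‖ ^ 2
        = ∑' n : ℤ, ‖fourierCoeff (⇑gL) n‖ ^ 2 := by simp_rw [hcoeff]
      _ ≤ C ^ 2 := by rw [hpars, hae]; exact hmono

private lemma bern_lift_continuous {f : ℝ → ℂ} {T : ℝ} (hp : Function.Periodic f T)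
    (hc : Continuous f) : Continuous hp.lift :=
  Continuous.quotient_liftOn' hc _

private lemma bern_fourierCoeff_sub {T : ℝ} [hT : Fact (0 < T)] (g₁ g₂ : C(AddCircle T, ℂ))
    (n : ℤ) :
    fourierCoeff (⇑(g₁ - g₂)) n = fourierCoeff (⇑g₁) n - fourierCoeff (⇑g₂) n := by
  have i1 : Integrable (fun t : AddCircle T => fourier (-n) t • g₁ t) haarAddCircle :=
    (((fourier (-n)).continuous).smul g₁.continuous).integrable_of_hasCompactSupport
      (HasCompactSupport.of_compactSpace _)
  have i2 : Integrable (fun t : AddCircle T => fourier (-n) t • g₂ t) haarAddCircle :=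
    (((fourier (-n)).continuous).smul g₂.continuous).integrable_of_hasCompactSupport
      (HasCompactSupport.of_compactSpace _)
  simp only [fourierCoeff, ContinuousMap.coe_sub, Pi.sub_apply, smul_sub]
  exact integral_sub i1 i2

private lemma bern_translate (f : ℝ → ℂ) (hp : Function.Periodic f (2 * π)) (h : ℝ) (n : ℤ) :
    ∫ x in (0:ℝ)..(2 * π), Complex.exp (-(n:ℂ) * (x:ℂ) * Complex.I) * f (x + h)
      = Complex.exp ((n:ℂ) * (h:ℂ) * Complex.I) *
        ∫ x in (0:ℝ)..(2 * π), Complex.exp (-(n:ℂ) * (x:ℂ) * Complex.I) * f x := by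
  set g : ℝ → ℂ := fun u =>
    Complex.exp ((n:ℂ) * (h:ℂ) * Complex.I) * (Complex.exp (-(n:ℂ) * (u:ℂ) * Complex.I) * f u)
    with hg
  have hgx : ∀ x : ℝ, g (x + h) = Complex.exp (-(n:ℂ) * (x:ℂ) * Complex.I) * f (x + h) := by
    intro x
    rw [hg]
    simp only
    rw [← mul_assoc, ← Complex.exp_add]
    push_cast
    ring_nf
  have hgper : Function.Periodic g (2 * π) := by
    intro u
    rw [hg]
    simp only
    rw [hp u]
    congr 1
    rw [show (-(n:ℂ) * ((u + 2*π : ℝ):ℂ) * Complex.I)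
        = (-(n:ℂ) * (u:ℂ) * Complex.I) + ((-n : ℤ) : ℂ) * (2 * (π:ℂ) * Complex.I) by
      push_cast; ring]
    rw [Complex.exp_add, Complex.exp_int_mul_two_pi_mul_I, mul_one]
  calc ∫ x in (0:ℝ)..(2 * π), Complex.exp (-(n:ℂ) * (x:ℂ) * Complex.I) * f (x + h)
      = ∫ x in (0:ℝ)..(2 * π), g (x + h) := by
        refine intervalIntegral.integral_congr fun x _ => (hgx x).symm
    _ = ∫ x in (0 + h)..(2 * π + h), g x := by
        rw [intervalIntegral.integral_comp_add_right g h]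
    _ = ∫ x in h..(h + 2 * π), g x := by rw [zero_add, add_comm (2*π) h]
    _ = ∫ x in (0:ℝ)..(0 + 2 * π), g x := hgper.intervalIntegral_add_eq h 0
    _ = Complex.exp ((n:ℂ) * (h:ℂ) * Complex.I) *
        ∫ x in (0:ℝ)..(2 * π), Complex.exp (-(n:ℂ) * (x:ℂ) * Complex.I) * f x := by
        rw [zero_add, hg, intervalIntegral.integral_const_mul]

private lemma bern_fourierCoeff_eq (g : ℝ → ℂ) (hpg : Function.Periodic g (2 * π)) (n : ℤ) :
    haveI : Fact (0 < 2 * π) := ⟨Real.two_pi_pos⟩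
    fourierCoeff (T := 2 * π) hpg.lift n
      = (1 / (2 * (π:ℂ))) * ∫ x in (0:ℝ)..(2 * π),
          Complex.exp (-(n:ℂ) * (x:ℂ) * Complex.I) * g x := by
  haveI : Fact (0 < 2 * π) := ⟨Real.two_pi_pos⟩
  rw [fourierCoeff_eq_intervalIntegral _ n 0, zero_add]
  have hint : ∀ x : ℝ,
      @fourier (2 * π) (-n) (x : AddCircle (2 * π)) • hpg.lift (x : AddCircle (2 * π))
      = Complex.exp (-(n:ℂ) * (x:ℂ) * Complex.I) * g x := by
    intro x
    rw [smul_eq_mul, fourier_coe_apply, hpg.lift_coe]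
    congr 2
    have hπ : (π:ℂ) ≠ 0 := Complex.ofReal_ne_zero.mpr Real.pi_ne_zero
    push_cast
    field_simp [hπ]
  rw [intervalIntegral.integral_congr (fun x _ => hint x)]
  rw [Complex.real_smul]
  push_cast
  ring

private lemma bern_pow_bound (α : ℝ) (hα : 1/2 < α) (K : ℝ) (m : ℕ) :
    (2:ℝ)^(m+2) * ((K * (π / 2^(m+1)) ^ α)^2 / 2)
      ≤ (K * π ^ α * ((2:ℝ) ^ ((1:ℝ)/2 - α)) ^ m)^2 := by
  have hπ := Real.pi_pos
  have h2 : (0:ℝ) < 2 := two_pos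
  have e1 : (π / (2:ℝ)^(m+1)) ^ α = π ^ α * (2:ℝ) ^ (-(((m:ℝ)+1) * α)) := by
    rw [div_eq_mul_inv, Real.mul_rpow hπ.le (by positivity), ← Real.rpow_natCast 2 (m+1),
      ← Real.rpow_neg h2.le, ← Real.rpow_mul h2.le]
    push_cast
    ring_nf
  set u : ℝ := (2:ℝ) ^ (-(((m:ℝ)+1) * α)) with hu
  set v : ℝ := ((2:ℝ) ^ ((1:ℝ)/2 - α)) ^ m with hv
  have e3 : ((2:ℝ))^(m+2) = (2:ℝ) ^ ((m:ℝ)+2) := by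
    rw [← Real.rpow_natCast 2 (m+2)]; push_cast; ring_nf
  have hu2 : (2:ℝ)^((m:ℝ)+2) * u^2 = (2:ℝ) ^ (((m:ℝ)+2) + (-2*((m:ℝ)+1)*α)) := by
    rw [hu, ← Real.rpow_natCast ((2:ℝ) ^ (-(((m:ℝ)+1) * α))) 2, ← Real.rpow_mul h2.le,
      ← Real.rpow_add h2]
    congr 1
    push_cast
    ring
  have hv2 : v^2 = (2:ℝ) ^ (2*(((1:ℝ)/2 - α) * m)) := by
    rw [hv, ← Real.rpow_natCast ((2:ℝ) ^ ((1:ℝ)/2 - α)) m, ← Real.rpow_mul h2.le,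
      ← Real.rpow_natCast ((2:ℝ) ^ (((1:ℝ)/2 - α) * (m:ℝ))) 2, ← Real.rpow_mul h2.le]
    congr 1
    push_cast
    ring
  have hexp : (2:ℝ) ^ (((m:ℝ)+2) + (-2*((m:ℝ)+1)*α)) ≤ 2 * (2:ℝ) ^ (2*(((1:ℝ)/2 - α) * m)) := by
    rw [show (2:ℝ) * (2:ℝ) ^ (2*(((1:ℝ)/2 - α) * m))
        = (2:ℝ) ^ ((1:ℝ) + 2*(((1:ℝ)/2 - α) * m)) by rw [Real.rpow_add h2, Real.rpow_one]]
    refine Real.rpow_le_rpow_of_exponent_le one_le_two ?_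
    have hm : (0:ℝ) ≤ (m:ℝ) := Nat.cast_nonneg m
    nlinarith
  rw [e1, e3]
  have hc : (0:ℝ) ≤ (K * π^α)^2 / 2 := by positivity
  nlinarith [mul_le_mul_of_nonneg_left hexp hc, hu2, hv2, sq_nonneg (K * π^α),
    Real.rpow_nonneg h2.le (((m:ℝ)+2) + (-2*((m:ℝ)+1)*α))]

end BernsteinAux

/-- Bernstein's theorem: if a `2π`-periodic function `f : ℝ → ℂ` satisfies a
Hölder condition of order `α > 1/2`, then its Fourier series converges
absolutely. -/
theorem bernstein_absolute_convergence
    (f : ℝ → ℂ) (hper : ∀ x : ℝ, f (x + 2 * π) = f x)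
    (α : ℝ) (hα : 1 / 2 < α) (K : ℝ)
    (hf : ∀ x h : ℝ, ‖f (x + h) - f x‖ ≤ K * |h| ^ α) :
    Summable (fun n : ℤ =>
      ‖(1 / (2 * (π : ℂ))) *
        ∫ θ in (0:ℝ)..(2 * π), f θ * Complex.exp (-(n : ℂ) * (θ : ℂ) * Complex.I)‖) := by
  classical
  haveI : Fact (0 < 2 * π) := ⟨Real.two_pi_pos⟩
  have hπ := Real.pi_pos
  have hK0 : 0 ≤ K := by
    have h1 := hf 0 1
    have h2 : (0:ℝ) ≤ ‖f (0 + 1) - f 0‖ := norm_nonneg _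
    simpa using h2.trans h1
  have hαpos : 0 < α := lt_trans (by norm_num) hα
  have hp : Function.Periodic f (2 * π) := hper
  -- continuity of f
  have hcont : Continuous f := by
    rw [continuous_iff_continuousAt]
    intro x
    rw [ContinuousAt, tendsto_iff_norm_sub_tendsto_zero]
    have hb : ∀ y : ℝ, ‖f y - f x‖ ≤ K * |y - x| ^ α := by
      intro y
      simpa using hf x (y - x)
    refine squeeze_zero_norm (fun y => by simpa using hb y) ?_
    have h1 : Tendsto (fun y : ℝ => |y - x|) (𝓝 x) (𝓝 0) := by
      have hsub : Tendsto (fun y : ℝ => y - x) (𝓝 x) (𝓝 0) := by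
        have h0 : Tendsto (fun y : ℝ => y) (𝓝 x) (𝓝 x) := tendsto_id
        have := h0.sub (tendsto_const_nhds (x := x))
        simpa using this
      simpa using hsub.abs
    have h2 : Tendsto (fun t : ℝ => t ^ α) (𝓝 0) (𝓝 0) := by
      have hcα : ContinuousAt (fun t : ℝ => t ^ α) 0 :=
        Real.continuousAt_rpow_const 0 α (Or.inr hαpos.le)
      have h0 : (0:ℝ) ^ α = 0 := Real.zero_rpow (ne_of_gt hαpos)
      simpa [ContinuousAt, h0] using hcα
    have := (h2.comp h1).const_mul K
    simpa using this
  -- the Fourier coefficients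
  set c : ℤ → ℂ := fun n => fourierCoeff (T := 2*π) hp.lift n with hc
  have hcn : ∀ k : ℤ, c k = fourierCoeff (T := 2*π) hp.lift k := fun _ => rfl
  have htarget : (fun n : ℤ =>
      ‖(1 / (2 * (π : ℂ))) *
        ∫ θ in (0:ℝ)..(2 * π), f θ * Complex.exp (-(n : ℂ) * (θ : ℂ) * Complex.I)‖)
      = fun n : ℤ => ‖c n‖ := by
    funext n
    rw [hcn n, bern_fourierCoeff_eq f hp n]
    congr 2
    exact intervalIntegral.integral_congr fun x _ => mul_comm _ _
  rw [htarget]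
  -- Parseval bound for translates
  have hP : ∀ h : ℝ,
      Summable (fun n : ℤ =>
        ‖(Complex.exp ((n:ℂ) * (h:ℂ) * Complex.I) - 1) * c n‖ ^ 2) ∧
      ∑' n : ℤ, ‖(Complex.exp ((n:ℂ) * (h:ℂ) * Complex.I) - 1) * c n‖ ^ 2
        ≤ (K * |h| ^ α) ^ 2 := by
    intro h
    have hph : Function.Periodic (fun x => f (x + h)) (2 * π) := by
      intro x
      simp only
      rw [add_right_comm, hp]
    have hconth : Continuous fun x => f (x + h) :=
      hcont.comp (continuous_id.add continuous_const)
    set G : C(AddCircle (2*π), ℂ) :=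
      ⟨hph.lift, bern_lift_continuous hph hconth⟩ - ⟨hp.lift, bern_lift_continuous hp hcont⟩
      with hG
    have hbound : ∀ t, ‖G t‖ ≤ K * |h| ^ α := by
      intro t
      induction t using QuotientAddGroup.induction_on with
      | H x =>
        rw [hG]
        simp only [ContinuousMap.sub_apply, ContinuousMap.coe_mk]
        rw [show ((x : AddCircle (2*π))) = ((x : ℝ) : AddCircle (2*π)) from rfl]
        rw [hph.lift_coe, hp.lift_coe]
        exact hf x h
    have hcoeffG : ∀ n : ℤ,
        fourierCoeff (⇑G) n = (Complex.exp ((n:ℂ) * (h:ℂ) * Complex.I) - 1) * c n := by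
      intro n
      rw [hG, bern_fourierCoeff_sub]
      show fourierCoeff (T := 2*π) hph.lift n - fourierCoeff (T := 2*π) hp.lift n = _
      rw [hcn n, bern_fourierCoeff_eq _ hph n, bern_fourierCoeff_eq _ hp n,
        bern_translate f hp h n]
      ring
    obtain ⟨hs, hb⟩ := bern_parseval G (K * |h| ^ α) hbound
    have hfun : (fun n : ℤ => ‖(Complex.exp ((n:ℂ) * (h:ℂ) * Complex.I) - 1) * c n‖ ^ 2)
        = fun n : ℤ => ‖fourierCoeff (⇑G) n‖ ^ 2 := by
      funext n
      rw [hcoeffG]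
    rw [hfun]
    exact ⟨hs, hb⟩
  -- the block estimate
  set r : ℝ := (2:ℝ) ^ ((1:ℝ)/2 - α) with hr
  have hr0 : 0 ≤ r := Real.rpow_nonneg (by norm_num) _
  have hr1 : r < 1 := Real.rpow_lt_one_of_one_lt_of_neg one_lt_two (by linarith)
  have main_est : ∀ (m : ℕ) (s : Finset ℤ),
      (∀ n ∈ s, 2^m ≤ n.natAbs ∧ n.natAbs < 2^(m+1)) →
      ∑ n ∈ s, ‖c n‖ ≤ (K * π ^ α) * r ^ m := by
    intro m s hs
    set h : ℝ := π / 2^(m+1) with hh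
    have hhpos : 0 < h := by positivity
    obtain ⟨hsum, hbnd⟩ := hP h
    have hpt : ∀ n ∈ s, 2 * ‖c n‖^2
        ≤ ‖(Complex.exp ((n:ℂ) * (h:ℂ) * Complex.I) - 1) * c n‖ ^ 2 := by
      intro n hn
      obtain ⟨h1, h2⟩ := hs n hn
      have habs : |(n:ℝ)| = (n.natAbs : ℝ) := by
        rw [Nat.cast_natAbs, Int.cast_abs]
      have hlow : π/2 ≤ (n.natAbs : ℝ) * h := by
        have h1' : ((2:ℝ)^m) ≤ (n.natAbs : ℝ) := by exact_mod_cast h1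
        have : (2:ℝ)^m * h = π / 2 := by
          rw [hh, pow_succ]
          field_simp
        calc π/2 = (2:ℝ)^m * h := this.symm
          _ ≤ (n.natAbs : ℝ) * h := by
            exact mul_le_mul_of_nonneg_right h1' hhpos.le
      have hhigh : (n.natAbs : ℝ) * h ≤ π + π/2 := by
        have h2' : (n.natAbs : ℝ) ≤ (2:ℝ)^(m+1) := by
          have := h2.le
          exact_mod_cast this
        have : (2:ℝ)^(m+1) * h = π := by
          rw [hh]
          field_simp
        calc (n.natAbs : ℝ) * h ≤ (2:ℝ)^(m+1) * h :=
            mul_le_mul_of_nonneg_right h2' hhpos.le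
          _ = π := this
          _ ≤ π + π/2 := by linarith
      have hcos : Real.cos ((n:ℝ) * h) ≤ 0 := by
        have : Real.cos ((n:ℝ) * h) = Real.cos ((n.natAbs : ℝ) * h) := by
          rw [← Real.cos_abs, abs_mul, habs, abs_of_pos hhpos]
        rw [this]
        exact Real.cos_nonpos_of_pi_div_two_le_of_le hlow hhigh
      have hcast : ((n:ℂ) * (h:ℂ) * Complex.I) = ((((n:ℝ) * h : ℝ)):ℂ) * Complex.I := by
        push_cast
        ring
      rw [hcast, norm_mul, mul_pow, bern_norm_exp_sub_one_sq]
      nlinarith [sq_nonneg ‖c n‖, norm_nonneg (c n)]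
    have hsq : ∑ n ∈ s, ‖c n‖^2 ≤ (K * |h| ^ α)^2 / 2 := by
      have hle1 : ∑ n ∈ s, 2 * ‖c n‖^2
          ≤ ∑ n ∈ s, ‖(Complex.exp ((n:ℂ) * (h:ℂ) * Complex.I) - 1) * c n‖ ^ 2 :=
        Finset.sum_le_sum hpt
      have hle2 : ∑ n ∈ s, ‖(Complex.exp ((n:ℂ) * (h:ℂ) * Complex.I) - 1) * c n‖ ^ 2
          ≤ ∑' n : ℤ, ‖(Complex.exp ((n:ℂ) * (h:ℂ) * Complex.I) - 1) * c n‖ ^ 2 :=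
        Summable.sum_le_tsum s (fun n _ => by positivity) hsum
      have := (hle1.trans hle2).trans hbnd
      rw [← Finset.mul_sum] at this
      linarith
    have hcard : (s.card : ℝ) ≤ (2:ℝ)^(m+2) := by
      have hsub : s ⊆ Finset.Ioo (-(2^(m+1)) : ℤ) (2^(m+1)) := by
        intro n hn
        obtain ⟨_, h2⟩ := hs n hn
        rw [Finset.mem_Ioo]
        have : |n| < (2:ℤ)^(m+1) := by
          rw [Int.abs_eq_natAbs]
          exact_mod_cast h2
        constructor
        · linarith [neg_abs_le n]
        · linarith [le_abs_self n]
      have h1 : s.card ≤ (Finset.Ioo (-(2^(m+1)) : ℤ) (2^(m+1))).card :=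
        Finset.card_le_card hsub
      have h2 : ((Finset.Ioo (-(2^(m+1)) : ℤ) (2^(m+1))).card : ℤ)
          ≤ (2:ℤ)^(m+2) := by
        rw [Int.card_Ioo]
        rw [Int.toNat_of_nonneg (by
          linarith [pow_pos (show (0:ℤ) < 2 by norm_num) (m+1)])]
        have : (2:ℤ)^(m+2) = 2^(m+1) + 2^(m+1) := by ring
        linarith
      have : (s.card : ℤ) ≤ (2:ℤ)^(m+2) := le_trans (by exact_mod_cast h1) h2
      exact_mod_cast this
    have hCS : (∑ n ∈ s, ‖c n‖)^2 ≤ (s.card : ℝ) * ∑ n ∈ s, ‖c n‖^2 := by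
      exact_mod_cast sq_sum_le_card_mul_sum_sq (s := s) (f := fun n => ‖c n‖)
    have habsh : |h| = h := abs_of_pos hhpos
    have final : (∑ n ∈ s, ‖c n‖)^2 ≤ ((K * π ^ α) * r ^ m)^2 := by
      have hb1 : (s.card : ℝ) * ∑ n ∈ s, ‖c n‖^2
          ≤ (2:ℝ)^(m+2) * ((K * |h| ^ α)^2 / 2) := by
        refine mul_le_mul hcard hsq (Finset.sum_nonneg fun n _ => by positivity)
          (by positivity)
      have hb2 := bern_pow_bound α hα K m
      rw [habsh] at hb1
      calc (∑ n ∈ s, ‖c n‖)^2 ≤ (s.card : ℝ) * ∑ n ∈ s, ‖c n‖^2 := hCS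
        _ ≤ (2:ℝ)^(m+2) * ((K * h ^ α)^2 / 2) := hb1
        _ ≤ (K * π ^ α * r ^ m)^2 := by rw [hh, hr] at *; exact hb2
        _ = ((K * π ^ α) * r ^ m)^2 := by ring
    have hnn : 0 ≤ (K * π ^ α) * r ^ m := by positivity
    nlinarith [final, hnn, Finset.sum_nonneg (fun n (_ : n ∈ s) => norm_nonneg (c n))]
  -- assemble
  refine summable_of_sum_le (c := ‖c 0‖ + (K * π ^ α) * (1 - r)⁻¹)
    (fun n => norm_nonneg _) ?_
  intro u
  set u' := u.erase 0 with hu'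
  have step1 : ∑ n ∈ u, ‖c n‖ ≤ ‖c 0‖ + ∑ n ∈ u', ‖c n‖ := by
    by_cases h0 : (0:ℤ) ∈ u
    · rw [hu', ← Finset.add_sum_erase _ _ h0]
    · rw [hu', Finset.erase_eq_of_notMem h0]
      exact le_add_of_nonneg_left (norm_nonneg _)
  set M := (u'.sup fun n => Nat.log 2 n.natAbs) + 1 with hM
  have hmaps : ∀ n ∈ u', Nat.log 2 n.natAbs ∈ Finset.range M := by
    intro n hn
    rw [Finset.mem_range, hM]
    exact Nat.lt_succ_of_le (Finset.le_sup (f := fun n => Nat.log 2 n.natAbs) hn)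
  have step2 : ∑ n ∈ u', ‖c n‖
      = ∑ m ∈ Finset.range M, ∑ n ∈ u'.filter fun n => Nat.log 2 n.natAbs = m, ‖c n‖ :=
    (Finset.sum_fiberwise_of_maps_to hmaps _).symm
  have step3 : ∀ m ∈ Finset.range M,
      ∑ n ∈ u'.filter (fun n => Nat.log 2 n.natAbs = m), ‖c n‖ ≤ (K * π ^ α) * r ^ m := by
    intro m _
    refine main_est m _ fun n hn => ?_
    rw [Finset.mem_filter] at hn
    obtain ⟨hn1, hn2⟩ := hn
    have hne : n ≠ 0 := Finset.ne_of_mem_erase hn1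
    have hna : n.natAbs ≠ 0 := Int.natAbs_ne_zero.mpr hne
    constructor
    · rw [← hn2]
      exact Nat.pow_log_le_self 2 hna
    · rw [← hn2]
      exact Nat.lt_pow_succ_log_self (by norm_num) _
  have geom : ∑ m ∈ Finset.range M, r ^ m ≤ (1 - r)⁻¹ := by
    have hs := summable_geometric_of_lt_one hr0 hr1
    have := Summable.sum_le_tsum (Finset.range M) (fun i _ => pow_nonneg hr0 i) hs
    rwa [tsum_geometric_of_lt_one hr0 hr1] at this
  calc ∑ n ∈ u, ‖c n‖ ≤ ‖c 0‖ + ∑ n ∈ u', ‖c n‖ := step1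
    _ = ‖c 0‖ + ∑ m ∈ Finset.range M,
        ∑ n ∈ u'.filter fun n => Nat.log 2 n.natAbs = m, ‖c n‖ := by rw [step2]
    _ ≤ ‖c 0‖ + ∑ m ∈ Finset.range M, (K * π ^ α) * r ^ m := by
        gcongr with m hm
        exact step3 m hm
    _ = ‖c 0‖ + (K * π ^ α) * ∑ m ∈ Finset.range M, r ^ m := by rw [Finset.mul_sum]
    _ ≤ ‖c 0‖ + (K * π ^ α) * (1 - r)⁻¹ := by
        have : (0:ℝ) ≤ K * π ^ α := by positivity
        nlinarith [geom, this]
end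

section
/- (Smith) Let β > 1 and let φ : ℝ → ℂ be a continuous integrable function whose Fourier transform φ̂(y) = ∫_{−∞}^∞ e^{−2πixy} φ(x) dx satisfies: |y|^β |φ̂(y)| is bounded on ℝ. Suppose moreover that for each fixed h > 0 the series ∑_{k=−∞}^∞ h φ(hk + hα) converges uniformly in α on every finite interval. Then for every fixed real α, ∑_{k=−∞}^∞ h φ(hk + hα) = φ̂(0) + O(h^β) as h → 0+. -/
open Real Filter Topology MeasureTheory

/-- Smith's lemma: if `φ : ℝ → ℂ` is continuous and integrable, its Fourier
transform `φ̂(y) = ∫ e^{-2πixy} φ(x) dx` satisfies `|y|^β |φ̂(y)| = O(1)` for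
some `β > 1`, and for each `h > 0` the series `∑_k h φ(hk + hα)` converges
uniformly in `α` on every finite interval, then for each fixed `α`,
`∑_k h φ(hk + hα) = φ̂(0) + O(h^β)` as `h → 0+`. -/
theorem smith_poisson_summation_estimate
    (β : ℝ) (hβ : 1 < β) (φ : ℝ → ℂ)
    (hcont : Continuous φ) (hint : Integrable φ)
    (hFT : ∃ M : ℝ, ∀ y : ℝ,
      |y| ^ β * ‖∫ x : ℝ, Complex.exp (-2 * (π : ℂ) * Complex.I * (x : ℂ) * (y : ℂ)) * φ x‖ ≤ M)
    (hunif : ∀ h : ℝ, 0 < h → ∀ R : ℝ, TendstoUniformlyOn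
      (fun (s : Finset ℤ) (α : ℝ) => ∑ k ∈ s, (h : ℂ) * φ (h * (k : ℝ) + h * α))
      (fun α : ℝ => ∑' k : ℤ, (h : ℂ) * φ (h * (k : ℝ) + h * α))
      atTop (Set.Icc (-R) R))
    (α : ℝ) :
    ∃ C > (0:ℝ), ∃ δ > (0:ℝ), ∀ h : ℝ, 0 < h → h < δ →
      ‖(∑' k : ℤ, (h : ℂ) * φ (h * (k : ℝ) + h * α)) -
        ∫ x : ℝ, Complex.exp (-2 * (π : ℂ) * Complex.I * (x : ℂ) * (0 : ℂ)) * φ x‖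
        ≤ C * h ^ β := by
  classical
  obtain ⟨M, hM⟩ := hFT
  set ψ : ℝ → ℂ := fun y => ∫ x : ℝ, Complex.exp (-2 * (π : ℂ) * Complex.I * (x : ℂ) * (y : ℂ)) * φ x with hψdef
  have hM0 : 0 ≤ M := le_trans (by positivity) (hM 1)
  have hKsum : Summable (fun m : ℤ => |(m : ℝ)| ^ (-β)) := Real.summable_abs_int_rpow hβ
  set K : ℝ := ∑' m : ℤ, |(m : ℝ)| ^ (-β) with hKdef
  have hK0 : 0 ≤ K := tsum_nonneg fun m => Real.rpow_nonneg (abs_nonneg _) _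
  refine ⟨M * K + 1, by positivity, 1, one_pos, fun h hp _ => ?_⟩
  have hhne : (h : ℂ) ≠ 0 := Complex.ofReal_ne_zero.mpr hp.ne'
  set F : ℝ → ℂ := fun t => ∑' k : ℤ, (h : ℂ) * φ (h * (k : ℝ) + h * t) with hFdef
  set P : Finset ℤ → ℝ → ℂ := fun s t => ∑ k ∈ s, (h : ℂ) * φ (h * (k : ℝ) + h * t) with hPdef
  have hPcont : ∀ s : Finset ℤ, Continuous (P s) := fun s =>
    continuous_finset_sum _ fun k _ => continuous_const.mul (hcont.comp (by continuity))
  have hFcont : Continuous F := by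
    rw [continuous_iff_continuousAt]
    intro t
    have hu := hunif h hp (|t| + 1)
    have hco := hu.continuousOn (Frequently.of_forall fun s => (hPcont s).continuousOn)
    exact hco.continuousAt (Icc_mem_nhds (by cases abs_cases t <;> linarith)
      (by cases abs_cases t <;> linarith))
  have hFper : Function.Periodic F 1 := by
    intro t
    have h1 : F (t + 1) = ∑' k : ℤ, (h : ℂ) * φ (h * ((k : ℤ) + 1 : ℤ) + h * t) := by
      simp only [hFdef]
      congr 1; funext k; push_cast; ring_nf
    rw [h1]
    exact (Equiv.addRight (1 : ℤ)).tsum_eq fun k : ℤ => (h : ℂ) * φ (h * (k : ℝ) + h * t)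
  let Fc : C(UnitAddCircle, ℂ) := ⟨hFper.lift, continuous_coinduced_dom.mpr hFcont⟩
  -- Fourier coefficients
  have hcoeff : ∀ m : ℤ, fourierCoeff (Fc : UnitAddCircle → ℂ) m = ψ ((m : ℝ) / h) := by
    intro m
    set e : ℝ → ℂ := fun u => fourier (-m) (u : UnitAddCircle) with hedef
    have he : Continuous e := (map_continuous (fourier (-m))).comp continuous_quotient_mk'
    have henorm : ∀ u : ℝ, ‖e u‖ = 1 := fun u => Circle.norm_coe (AddCircle.toCircle (-m • (u : UnitAddCircle)))
    have heper : ∀ (k : ℤ) (u : ℝ), e (u + k) = e u := by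
      intro k u
      have hper : Function.Periodic e 1 :=
        Function.Periodic.comp (fun x => AddCircle.coe_add_period 1 x) (fourier (-m))
      simpa only [mul_one] using hper.int_mul k u  -- may need fixing
    have hfint : Integrable (fun u : ℝ => e u * ((h : ℂ) * φ (h * u))) := by
      refine Integrable.bdd_mul ?_ he.aestronglyMeasurable (Eventually.of_forall fun u => (henorm u).le)
      exact (hint.comp_mul_left' hp.ne').const_mul _
    -- step A: swap integral and sum
    have hA : HasSum (fun k : ℤ => ∫ t in (0:ℝ)..1, e t * ((h : ℂ) * φ (h * (k : ℝ) + h * t)))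
        (∫ t in (0:ℝ)..1, e t * F t) := by
      have hIIP : ∀ (s : Finset ℤ) (k : ℤ), k ∈ s → IntervalIntegrable
          (fun t => e t * ((h : ℂ) * φ (h * (k : ℝ) + h * t))) volume (0:ℝ) 1 := fun s k _ =>
        (he.mul (continuous_const.mul (hcont.comp (by continuity)))).intervalIntegrable 0 1
      rw [HasSum]
      have heq : ∀ s : Finset ℤ, ∑ k ∈ s, (∫ t in (0:ℝ)..1, e t * ((h : ℂ) * φ (h * (k : ℝ) + h * t)))
          = ∫ t in (0:ℝ)..1, e t * P s t := by
        intro s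
        rw [← intervalIntegral.integral_finset_sum (hIIP s)]
        congr 1; funext t; simp only [hPdef, Finset.mul_sum]
      simp only [heq]
      obtain ⟨B, hB⟩ := (isCompact_Icc (a := (0:ℝ)) (b := 1)).exists_bound_of_continuousOn
        hFcont.continuousOn
      refine intervalIntegral.tendsto_integral_filter_of_dominated_convergence (fun _ => B + 1)
        (Eventually.of_forall fun s => ((he.mul (hPcont s)).aestronglyMeasurable).restrict) ?_
        (intervalIntegrable_const) ?_
      · have := (Metric.tendstoUniformlyOn_iff.mp (hunif h hp 1)) 1 one_pos
        filter_upwards [this] with s hs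
        refine Eventually.of_forall fun t ht => ?_
        have ht' : t ∈ Set.Icc (-1:ℝ) 1 := by
          rcases Set.mem_uIoc.mp ht with h1 | h1 <;> constructor <;> linarith [h1.1, h1.2]
        have hd := hs t ht'
        rw [dist_eq_norm] at hd
        have hFB : ‖F t‖ ≤ B := hB t ⟨by rcases Set.mem_uIoc.mp ht with h1 | h1 <;> linarith [h1.1, h1.2],
          by rcases Set.mem_uIoc.mp ht with h1 | h1 <;> linarith [h1.1, h1.2]⟩
        calc ‖e t * P s t‖ = ‖P s t‖ := by rw [norm_mul, henorm, one_mul]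
          _ ≤ ‖F t‖ + ‖F t - P s t‖ := by
              have := norm_sub_norm_le (P s t) (F t)
              have h2 := norm_add_le (F t) (P s t - F t)
              calc ‖P s t‖ = ‖F t + (P s t - F t)‖ := by ring_nf
                _ ≤ ‖F t‖ + ‖P s t - F t‖ := norm_add_le _ _
                _ = ‖F t‖ + ‖F t - P s t‖ := by rw [norm_sub_rev]
          _ ≤ B + 1 := add_le_add hFB hd.le
      · refine Eventually.of_forall fun t ht => ?_
        have ht' : t ∈ Set.Icc (-1:ℝ) 1 := by
          rcases Set.mem_uIoc.mp ht with h1 | h1 <;> constructor <;> linarith [h1.1, h1.2]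
        exact ((hunif h hp 1).tendsto_at ht').const_mul (e t)
    -- step B
    have hB2 : HasSum (fun k : ℤ => ∫ t in (0:ℝ)..1, e t * ((h : ℂ) * φ (h * (k : ℝ) + h * t)))
        (∫ u : ℝ, e u * ((h : ℂ) * φ (h * u))) := by
      have hsum := hfint.hasSum_intervalIntegral_comp_add_int
      have : (fun k : ℤ => ∫ t in (0:ℝ)..1, e t * ((h : ℂ) * φ (h * (k : ℝ) + h * t)))
          = fun k : ℤ => ∫ t in (0:ℝ)..1, e (t + k) * ((h : ℂ) * φ (h * (t + (k:ℝ)))) := by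
        funext k
        congr 1; funext t
        rw [heper k t, show h * (t + (k:ℝ)) = h * (k:ℝ) + h * t by ring]
      rw [this]
      exact hsum
    have hcoe : fourierCoeff (Fc : UnitAddCircle → ℂ) m
        = ∫ t in (0:ℝ)..1, e t * F t := by
      rw [fourierCoeff_eq_intervalIntegral (Fc : UnitAddCircle → ℂ) m 0]
      simp only [zero_add, one_smul, smul_eq_mul, one_div, inv_one]
      congr 1
    have hval : (∫ u : ℝ, e u * ((h : ℂ) * φ (h * u))) = ψ ((m : ℝ) / h) := by
      have harg : ∀ u : ℝ, e u * ((h : ℂ) * φ (h * u))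
          = (h:ℂ) * (Complex.exp (-2 * (π : ℂ) * Complex.I * ((h*u : ℝ) : ℂ) * (((m:ℝ)/h : ℝ) : ℂ)) * φ (h * u)) := by
        intro u
        have he1 : e u = Complex.exp (2 * (π:ℂ) * Complex.I * (-m : ℤ) * u / 1) := fourier_coe_apply
        rw [he1]
        have : (2 * (π:ℂ) * Complex.I * ((-m : ℤ) : ℂ) * u / 1)
            = -2 * (π : ℂ) * Complex.I * ((h*u : ℝ) : ℂ) * (((m:ℝ)/h : ℝ) : ℂ) := by
          push_cast
          field_simp
        rw [this]
        ring
      simp only [harg]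
      rw [MeasureTheory.integral_const_mul]
      rw [MeasureTheory.Measure.integral_comp_mul_left
        (fun x : ℝ => Complex.exp (-2 * (π : ℂ) * Complex.I * (x : ℂ) * (((m:ℝ)/h : ℝ) : ℂ)) * φ x) h]
      rw [abs_of_pos (inv_pos.mpr hp)]
      rw [hψdef]
      rw [Complex.real_smul]
      push_cast
      rw [← mul_assoc, mul_inv_cancel₀ hhne, one_mul]
    rw [hcoe, ← hval]
    exact hA.unique hB2
  -- summability and bound of coefficients
  have hbound : ∀ m : ℤ, m ≠ 0 →
      ‖fourierCoeff (Fc : UnitAddCircle → ℂ) m‖ ≤ M * h ^ β * |(m : ℝ)| ^ (-β) := by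
    intro m hm
    have hmpos : (0:ℝ) < |(m:ℝ)| := by
      exact abs_pos.mpr (Int.cast_ne_zero.mpr hm)
    have h1 := hM ((m : ℝ) / h)
    have habs : |(m : ℝ) / h| = |(m:ℝ)| / h := by
      rw [abs_div, abs_of_pos hp]
    rw [habs, Real.div_rpow (abs_nonneg _) hp.le] at h1
    have hpow : (0:ℝ) < |(m:ℝ)| ^ β / h ^ β :=
      div_pos (Real.rpow_pos_of_pos hmpos β) (Real.rpow_pos_of_pos hp β)
    rw [hcoeff m]
    have h2 : ‖ψ ((m : ℝ)/h)‖ ≤ M / (|(m:ℝ)| ^ β / h ^ β) := by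
      rw [le_div_iff₀ hpow]; linarith [h1]
    calc ‖ψ ((m : ℝ)/h)‖ ≤ M / (|(m:ℝ)| ^ β / h ^ β) := h2
      _ = M * h ^ β * (|(m:ℝ)| ^ β)⁻¹ := by field_simp
      _ = M * h ^ β * |(m:ℝ)| ^ (-β) := by rw [Real.rpow_neg (abs_nonneg _)]
  have hsummable : Summable (fun m : ℤ => fourierCoeff (Fc : UnitAddCircle → ℂ) m) := by
    refine Summable.of_norm_bounded_eventually (g := fun m : ℤ => M * h ^ β * |(m:ℝ)| ^ (-β))
      (hKsum.mul_left _) ?_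
    rw [Filter.eventually_cofinite]
    exact Set.Finite.subset (Set.finite_singleton 0) fun m hm => by
      by_contra h0
      exact hm (hbound m h0)
  have hfs := has_pointwise_sum_fourier_series_of_summable hsummable ((α : ℝ) : UnitAddCircle)
  -- update at 0
  set c : ℤ → ℂ := fun m => fourierCoeff (Fc : UnitAddCircle → ℂ) m • fourier m ((α:ℝ) : UnitAddCircle) with hcdef
  have hc0 : c 0 = ψ 0 := by
    simp only [hcdef, fourier_zero, smul_eq_mul, mul_one]
    have := hcoeff 0
    simpa using this
  have hupd : HasSum (Function.update c 0 0) (Fc ((α:ℝ) : UnitAddCircle) - c 0) := by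
    have := hfs.update 0 0
    simpa [sub_eq_neg_add] using this
  have hnormbd : ∀ m : ℤ, ‖Function.update c 0 0 m‖ ≤ M * h ^ β * |(m:ℝ)| ^ (-β) := by
    intro m
    rcases eq_or_ne m 0 with rfl | hm
    · simp [Real.zero_rpow (neg_ne_zero.mpr (by linarith : β ≠ 0))]
    · rw [Function.update_of_ne hm]
      have : ‖c m‖ = ‖fourierCoeff (Fc : UnitAddCircle → ℂ) m‖ := by
        rw [hcdef]
        rw [norm_smul]
        have : ‖(fourier m ((α:ℝ) : UnitAddCircle) : ℂ)‖ = 1 :=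
          Circle.norm_coe (AddCircle.toCircle (m • ((α:ℝ) : UnitAddCircle)))
        rw [this, mul_one]
      rw [this]
      exact hbound m hm
  have hfinal : ‖Fc ((α:ℝ) : UnitAddCircle) - ψ 0‖ ≤ M * h ^ β * K := by
    rw [← hc0, ← hupd.tsum_eq]
    calc ‖∑' m, Function.update c 0 0 m‖ ≤ ∑' m, ‖Function.update c 0 0 m‖ :=
          norm_tsum_le_tsum_norm (hupd.summable.norm)
      _ ≤ ∑' m : ℤ, M * h ^ β * |(m:ℝ)| ^ (-β) :=
          Summable.tsum_le_tsum hnormbd hupd.summable.norm (hKsum.mul_left _)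
      _ = M * h ^ β * K := by rw [tsum_mul_left]
  have hFcα : Fc ((α:ℝ) : UnitAddCircle) = F α := hFper.lift_coe α
  rw [hFcα] at hfinal
  have hψ0 : ψ 0 = ∫ x : ℝ, Complex.exp (-2 * (π : ℂ) * Complex.I * (x : ℂ) * (0 : ℂ)) * φ x := by
    simp [hψdef]
  calc ‖F α - ∫ x : ℝ, Complex.exp (-2 * (π : ℂ) * Complex.I * (x : ℂ) * (0 : ℂ)) * φ x‖
      = ‖F α - ψ 0‖ := by rw [hψ0]
    _ ≤ M * h ^ β * K := hfinal
    _ ≤ (M * K + 1) * h ^ β := by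
        have h3 : (0:ℝ) ≤ h ^ β := Real.rpow_nonneg hp.le β
        nlinarith
end
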